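/- arXiv:2512.08357 — 6 statements merged into one kernel-verified Lean document; each statement's English description precedes it below -/
import Mathlib

section
/- The family (T_n)_{n ≥ 1} is linearly independent over ℚ in 𝒢: for every finite set S of positive integers and rational numbers (c_n)_{n ∈ S}, if ∑_{n ∈ S} c_n · T_n = 0 in 𝒢 then c_n = 0 for every n ∈ S. In particular, for every N ≥ 1 the elements (T_k)_{k | N} form a basis of the ℚ-subspace of 𝒢 that they span. -/
noncomputable section

/-- `G = (ℝ/ℤ)^r`. -/
abbrev Gr (r : ℕ) : Type := Fin r → AddCircle (1 : ℝ)

/-- The group algebra `𝒢 = ℚ[G]`. -/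
abbrev GA (r : ℕ) : Type := AddMonoidAlgebra ℚ (Gr r)

/-- `T_n := n^{-r} • ∑_{τ : n • τ = 0} (τ)`, the average of the `n`-torsion
elements of `G`. -/
noncomputable def Tor (r n : ℕ) : GA r :=
  ((n : ℚ) ^ r)⁻¹ • ∑ᶠ τ ∈ {τ : Gr r | n • τ = 0}, AddMonoidAlgebra.single τ (1 : ℚ)

instance : Fact ((0 : ℝ) < 1) := ⟨one_pos⟩

lemma circle_torsion_finite (n : ℕ) (hn : 1 ≤ n) :
    {x : AddCircle (1 : ℝ) | n • x = 0}.Finite := by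
  have hsub : {x : AddCircle (1 : ℝ) | n • x = 0} ⊆
      ⋃ d ∈ n.divisors, {x : AddCircle (1 : ℝ) | addOrderOf x = d} := by
    intro x hx
    simp only [Set.mem_setOf_eq] at hx
    have hdvd : addOrderOf x ∣ n := addOrderOf_dvd_of_nsmul_eq_zero hx
    have hpos : 0 < addOrderOf x := by
      have : IsOfFinAddOrder x := isOfFinAddOrder_iff_nsmul_eq_zero.2 ⟨n, hn, hx⟩
      exact this.addOrderOf_pos
    exact Set.mem_biUnion (Nat.mem_divisors.2 ⟨hdvd, by omega⟩) rfl
  refine Set.Finite.subset (Set.Finite.biUnion (n.divisors.finite_toSet) ?_) hsub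
  intro d hd
  exact AddCircle.finite_setOfPred_addOrderOf_eq (1 : ℝ) (Nat.pos_of_mem_divisors hd)

lemma torsion_finite (r n : ℕ) (hn : 1 ≤ n) :
    {τ : Gr r | n • τ = 0}.Finite := by
  have : {τ : Gr r | n • τ = 0} ⊆
      Set.pi Set.univ (fun _ : Fin r => {x : AddCircle (1 : ℝ) | n • x = 0}) := by
    intro τ hτ i _
    simp only [Set.mem_setOf_eq] at hτ ⊢
    exact congrFun hτ i
  exact Set.Finite.subset (Set.Finite.pi fun _ => circle_torsion_finite n hn) this

lemma Tor_apply (r n : ℕ) (hn : 1 ≤ n) (τ : Gr r) :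
    (Tor r n).coeff τ = if n • τ = 0 then ((n : ℚ) ^ r)⁻¹ else 0 := by
  have hfin := torsion_finite r n hn
  rw [Tor, ← hfin.coe_toFinset, finsum_mem_coe_finset, AddMonoidAlgebra.coeff_smul_apply,
    AddMonoidAlgebra.coeff_sum, Finsupp.finset_sum_apply]
  simp only [AddMonoidAlgebra.coeff_single, Finsupp.single_apply]
  rw [Finset.sum_ite_eq' hfin.toFinset τ (fun _ => (1 : ℚ))]
  by_cases h : n • τ = 0
  · rw [if_pos (hfin.mem_toFinset.2 h), if_pos h, smul_eq_mul, mul_one]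
  · rw [if_neg (fun hh => h (hfin.mem_toFinset.1 hh)), if_neg h, smul_eq_mul, mul_zero]

/-- A point of exact order `n` in `G`. -/
def tau0 (r n : ℕ) : Gr r := fun _ => (((1 : ℝ) / n : ℝ) : AddCircle (1 : ℝ))

lemma smul_tau0_eq_zero_iff (r : ℕ) (hr : 1 ≤ r) (n : ℕ) (hn : 1 ≤ n) (m : ℕ) :
    m • tau0 r n = 0 ↔ n ∣ m := by
  have horder : addOrderOf (((1 : ℝ) / n : ℝ) : AddCircle (1 : ℝ)) = n :=
    AddCircle.addOrderOf_period_div hn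
  constructor
  · intro h
    have := congrFun h ⟨0, hr⟩
    have h0 : m • (((1 : ℝ) / n : ℝ) : AddCircle (1 : ℝ)) = 0 := this
    have := addOrderOf_dvd_of_nsmul_eq_zero h0
    rwa [horder] at this
  · intro h
    funext i
    show m • (((1 : ℝ) / n : ℝ) : AddCircle (1 : ℝ)) = 0
    exact addOrderOf_dvd_iff_nsmul_eq_zero.1 (by rw [horder]; exact h)

lemma key (r : ℕ) (hr : 1 ≤ r) : ∀ S : Finset ℕ, (∀ n ∈ S, 1 ≤ n) → ∀ c : ℕ → ℚ,
    (∑ n ∈ S, c n • Tor r n) = 0 → ∀ n ∈ S, c n = 0 := by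
  intro S
  induction S using Finset.strongInduction with
  | _ S ih =>
    intro hS c hsum n hn
    have hSne : S.Nonempty := ⟨n, hn⟩
    set N := S.max' hSne with hNdef
    have hNS : N ∈ S := S.max'_mem hSne
    have hN1 : 1 ≤ N := hS N hNS
    -- evaluate at tau0 r N
    have heval : (0 : ℚ) = ∑ m ∈ S, c m * (Tor r m).coeff (tau0 r N) := by
      have := congrFun (congrArg (fun f : GA r => (f.coeff : Gr r → ℚ)) hsum) (tau0 r N)
      simp only [AddMonoidAlgebra.coeff_zero, Finsupp.coe_zero, Pi.zero_apply] at this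
      rw [← this, AddMonoidAlgebra.coeff_sum, Finsupp.finset_sum_apply]
      exact Finset.sum_congr rfl fun m _ => by rw [AddMonoidAlgebra.coeff_smul_apply, smul_eq_mul]
    have hterm : ∀ m ∈ S, c m * (Tor r m).coeff (tau0 r N) =
        if m = N then c N * ((N : ℚ) ^ r)⁻¹ else 0 := by
      intro m hm
      rw [Tor_apply r m (hS m hm) (tau0 r N)]
      by_cases hmN : m = N
      · rw [if_pos hmN, hmN,
          if_pos ((smul_tau0_eq_zero_iff r hr N hN1 N).2 dvd_rfl)]
      · rw [if_neg hmN]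
        have : ¬ (m • tau0 r N = 0) := by
          rw [smul_tau0_eq_zero_iff r hr N hN1 m]
          intro hdvd
          have h1 := Nat.le_of_dvd (hS m hm) hdvd
          have h2 := S.le_max' m hm
          exact hmN (le_antisymm h2 h1)
        rw [if_neg this, mul_zero]
    have hcN : c N = 0 := by
      rw [Finset.sum_congr rfl hterm, Finset.sum_ite_eq' S N
        (fun _ => c N * ((N : ℚ) ^ r)⁻¹), if_pos hNS] at heval
      have hNr : ((N : ℚ) ^ r)⁻¹ ≠ 0 := by
        apply inv_ne_zero
        apply pow_ne_zero
        exact_mod_cast (by omega : N ≠ 0)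
      have := heval.symm
      exact (mul_eq_zero.1 this).resolve_right hNr
    -- now remove N and use induction
    have hsum' : (∑ m ∈ S.erase N, c m • Tor r m) = 0 := by
      have h := Finset.add_sum_erase S (fun m => c m • Tor r m) hNS
      rw [← h] at hsum
      simp only [hcN, zero_smul, zero_add] at hsum
      exact hsum
    by_cases hnN : n = N
    · rw [hnN]; exact hcN
    · exact ih (S.erase N) (S.erase_ssubset hNS)
        (fun m hm => hS m (S.erase_subset N hm)) c hsum'
        n (Finset.mem_erase.2 ⟨hnN, hn⟩)

/-- The family `(T_n)_{n ≥ 1}` is linearly independent over ℚ in `𝒢`.  In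
particular, for every `N ≥ 1` the family `(T_k)_{k ∣ N}` is linearly
independent (hence a basis of the ℚ-subspace it spans). -/
theorem statement2 (r : ℕ) (hr : 1 ≤ r) :
    (∀ S : Finset ℕ, (∀ n ∈ S, 1 ≤ n) → ∀ c : ℕ → ℚ,
      (∑ n ∈ S, c n • Tor r n) = 0 → ∀ n ∈ S, c n = 0) ∧
    (∀ N : ℕ, 1 ≤ N → LinearIndependent ℚ (fun k : N.divisors => Tor r k)) := by
  refine ⟨key r hr, ?_⟩
  intro N hN
  rw [Fintype.linearIndependent_iff]
  intro g hg i
  set c : ℕ → ℚ := fun n => if h : n ∈ N.divisors then g ⟨n, h⟩ else 0 with hc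
  have hsum : (∑ n ∈ N.divisors, c n • Tor r n) = 0 := by
    rw [← hg, ← Finset.sum_attach N.divisors (fun n => c n • Tor r n)]
    refine Finset.sum_congr rfl fun m _ => ?_
    simp only [hc, dif_pos m.2, Subtype.coe_eta]
  have := key r hr N.divisors (fun n hn => Nat.pos_of_mem_divisors hn) c hsum i.1 i.2
  simp only [hc, dif_pos i.2, Subtype.coe_eta] at this
  exact this

end
end

section
/- The refined divisor-sum is multiplicative: for all integers δ, a ≥ 1 and every integer m ≥ 0, σ^δ_m(a) = ∏_p σ^{p^{ν_p(δ)}}_m(p^{ν_p(a)}) in 𝒢, where the (finite) product runs over the primes p dividing δ·a and ν_p denotes the p-adic valuation (for primes p not dividing δ·a the corresponding factor is σ^1_m(1) = T_1 = (0), the identity of 𝒢). -/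
noncomputable section

def TS (r n : ℕ) : Set (Gr r) := {τ : Gr r | n • τ = 0}

def circleTorsionEquiv (n : ℕ) [NeZero n] :
    ZMod n ≃ {u : AddCircle (1:ℝ) // n • u = 0} := by
  have hn : 0 < n := NeZero.pos n
  refine Equiv.ofBijective (fun j => ⟨ZMod.toAddCircle j, ?_⟩) ⟨?_, ?_⟩
  · rw [← map_nsmul]
    have : (n • j : ZMod n) = 0 := by simp [nsmul_eq_mul]
    rw [this, map_zero]
  · intro x y hxy
    exact ZMod.toAddCircle_injective n (congrArg Subtype.val hxy)
  · rintro ⟨u, hu⟩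
    have hfin : IsOfFinAddOrder u := isOfFinAddOrder_iff_nsmul_eq_zero.2 ⟨n, hn, hu⟩
    set d := addOrderOf u with hd
    have hdpos : 0 < d := hfin.addOrderOf_pos
    have hdvd : d ∣ n := addOrderOf_dvd_of_nsmul_eq_zero hu
    obtain ⟨m, -, -, he⟩ := AddCircle.exists_gcd_eq_one_of_isOfFinAddOrder hfin
    refine ⟨((m * (n / d) : ℕ) : ZMod n), ?_⟩
    apply Subtype.ext
    show ZMod.toAddCircle _ = u
    rw [ZMod.toAddCircle_natCast, ← he]
    congr 1
    rw [mul_one, Nat.cast_mul,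
      Nat.cast_div (by exact_mod_cast hdvd) (by exact_mod_cast hdpos.ne' : (d:ℝ) ≠ 0)]
    field_simp
    rw [← hd, mul_div_cancel_right₀ _ (by exact_mod_cast hdpos.ne' : (d:ℝ) ≠ 0)]

def torsionEquiv (r n : ℕ) [NeZero n] : (Fin r → ZMod n) ≃ TS r n :=
  (Equiv.piCongrRight fun _ => circleTorsionEquiv n).trans
    { toFun := fun f => ⟨fun i => (f i).1, funext fun i => (f i).2⟩
      invFun := fun τ => fun i => ⟨τ.1 i, congrFun τ.2 i⟩
      left_inv := fun _ => rfl
      right_inv := fun _ => rfl }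

lemma TS_finite (r n : ℕ) [NeZero n] : (TS r n).Finite := by
  rw [← Set.finite_coe_iff]
  exact Finite.of_equiv _ (torsionEquiv r n)

/-- the torsion finset -/
def TSF (r n : ℕ) [NeZero n] : Finset (Gr r) := (TS_finite r n).toFinset

@[simp] lemma mem_TSF {r n : ℕ} [NeZero n] {x : Gr r} :
    x ∈ TSF r n ↔ n • x = 0 := by
  rw [TSF, Set.Finite.mem_toFinset]; rfl

lemma TSF_card (r n : ℕ) [NeZero n] : (TSF r n).card = n ^ r := by
  rw [TSF, ← Set.ncard_eq_toFinset_card _ (TS_finite r n), ← Nat.card_coe_set_eq,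
    ← Nat.card_congr (torsionEquiv r n)]
  simp [Nat.card_pi, Nat.card_zmod]

lemma Tor_eq (r n : ℕ) [NeZero n] :
    Tor r n = ((n : ℚ) ^ r)⁻¹ • ∑ τ ∈ TSF r n, AddMonoidAlgebra.single τ (1 : ℚ) := by
  have h : {τ : Gr r | n • τ = 0} = ↑(TSF r n) := by
    rw [TSF, Set.Finite.coe_toFinset]; rfl
  rw [Tor, h, finsum_mem_coe_finset]

lemma nsmul_zero_of_dvd {A : Type*} [AddCommGroup A] {m n : ℕ} (h : m ∣ n) {x : A}
    (hx : m • x = 0) : n • x = 0 := by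
  obtain ⟨c, rfl⟩ := h
  rw [mul_comm, mul_smul, hx, smul_zero]

lemma gcd_nsmul_zero {A : Type*} [AddCommGroup A] {m n : ℕ} {x : A}
    (hm : m • x = 0) (hn : n • x = 0) : (Nat.gcd m n) • x = 0 := by
  have hb := Nat.gcd_eq_gcd_ab m n
  have : ((Nat.gcd m n : ℤ)) • x = 0 := by
    rw [hb, add_zsmul, mul_comm (m:ℤ), mul_comm (n:ℤ), mul_zsmul, mul_zsmul]
    rw [natCast_zsmul, natCast_zsmul, hm, hn, smul_zero, smul_zero, add_zero]
  rwa [natCast_zsmul] at this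

lemma exists_decomp {A : Type*} [AddCommGroup A] {m n : ℕ} (hm : 0 < m)
    {x : A} (hx : Nat.lcm m n • x = 0) :
    ∃ σ τ : A, m • σ = 0 ∧ n • τ = 0 ∧ σ + τ = x := by
  set g := Nat.gcd m n with hg
  have hgpos : 0 < g := Nat.gcd_pos_of_pos_left n hm
  set c := n / g with hc
  set d := m / g with hdd
  have hcop : Nat.Coprime d c := Nat.coprime_div_gcd_div_gcd hgpos
  have hmc : m * c = Nat.lcm m n := by
    rw [hc, ← Nat.mul_div_assoc m (Nat.gcd_dvd_right m n), Nat.lcm]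
  have hnd : n * d = Nat.lcm m n := by
    rw [hdd, ← Nat.mul_div_assoc n (Nat.gcd_dvd_left m n), mul_comm n m, Nat.lcm]
  have h1 : Nat.gcd c d = 1 := Nat.Coprime.gcd_eq_one hcop.symm
  have hbez := Nat.gcd_eq_gcd_ab c d
  rw [h1] at hbez
  set a := Nat.gcdA c d
  set b := Nat.gcdB c d
  refine ⟨a • (c • x), b • (d • x), ?_, ?_, ?_⟩
  · rw [smul_comm (M := ℕ) (N := ℤ), ← mul_smul, hmc, hx, smul_zero]
  · rw [smul_comm (M := ℕ) (N := ℤ), ← mul_smul, hnd, hx, smul_zero]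
  · rw [← natCast_zsmul x c, ← natCast_zsmul x d, ← mul_smul, ← mul_smul, ← add_smul,
      mul_comm a, mul_comm b, ← hbez]
    norm_num

lemma Tor_one (r : ℕ) : Tor r 1 = 1 := by
  have h : {τ : Gr r | (1:ℕ) • τ = 0} = {0} := by
    ext τ; simp [one_nsmul]
  rw [Tor, h, finsum_mem_singleton]
  simp [AddMonoidAlgebra.one_def]

lemma single_mul_single' {r : ℕ} (σ τ : Gr r) :
    ∀ x y : GA r, x = AddMonoidAlgebra.single σ (1:ℚ) → y = AddMonoidAlgebra.single τ (1:ℚ) →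
      x * y = AddMonoidAlgebra.single (σ + τ) (1:ℚ) := by
  rintro x y rfl rfl
  simpa using AddMonoidAlgebra.single_mul_single (a₁ := σ) (a₂ := τ) (b₁ := (1:ℚ)) (b₂ := (1:ℚ))

lemma Tor_mul (r : ℕ) {m n : ℕ} (hm : 0 < m) (hn : 0 < n) :
    Tor r m * Tor r n = Tor r (Nat.lcm m n) := by
  classical
  haveI : NeZero m := ⟨hm.ne'⟩
  haveI : NeZero n := ⟨hn.ne'⟩
  have hL : 0 < Nat.lcm m n := Nat.lcm_pos hm hn
  have hg : 0 < Nat.gcd m n := Nat.gcd_pos_of_pos_left n hm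
  haveI : NeZero (Nat.lcm m n) := ⟨hL.ne'⟩
  haveI : NeZero (Nat.gcd m n) := ⟨hg.ne'⟩
  have himg : (TSF r m ×ˢ TSF r n).image (fun p : Gr r × Gr r => p.1 + p.2)
      = TSF r (Nat.lcm m n) := by
    ext x
    simp only [Finset.mem_image, Finset.mem_product, mem_TSF]
    constructor
    · rintro ⟨⟨σ, τ⟩, ⟨hσ, hτ⟩, rfl⟩
      show Nat.lcm m n • (σ + τ) = 0
      rw [smul_add, nsmul_zero_of_dvd (Nat.dvd_lcm_left m n) hσ,
        nsmul_zero_of_dvd (Nat.dvd_lcm_right m n) hτ, add_zero]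
    · intro hx
      obtain ⟨σ, τ, h1, h2, h3⟩ := exists_decomp hm hx
      exact ⟨(σ, τ), ⟨h1, h2⟩, h3⟩
  have hfib : ∀ x ∈ TSF r (Nat.lcm m n),
      ((TSF r m ×ˢ TSF r n).filter fun p : Gr r × Gr r => p.1 + p.2 = x).card
        = Nat.gcd m n ^ r := by
    intro x hx
    rw [mem_TSF] at hx
    obtain ⟨σ₀, τ₀, h1, h2, h3⟩ := exists_decomp hm hx
    have hcard : ((TSF r m ×ˢ TSF r n).filter fun p : Gr r × Gr r => p.1 + p.2 = x).card
        = (TSF r (Nat.gcd m n)).card := by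
      apply Finset.card_bij' (fun p _ => p.1 - σ₀) (fun y _ => (σ₀ + y, τ₀ - y))
      · rintro ⟨p1, p2⟩ hp
        rw [Finset.mem_filter, Finset.mem_product, mem_TSF, mem_TSF] at hp
        obtain ⟨⟨hp1, hp2⟩, hps⟩ := hp
        rw [mem_TSF]
        apply gcd_nsmul_zero
        · show m • (p1 - σ₀) = 0
          rw [smul_sub, hp1, h1, sub_zero]
        · have heq : p1 - σ₀ = τ₀ - p2 := by
            have h4 : p1 - σ₀ - (τ₀ - p2) = (p1 + p2) - (σ₀ + τ₀) := by abel
            rw [show p1 + p2 = x from hps, ← h3, sub_self] at h4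
            exact sub_eq_zero.mp h4
          show n • (p1 - σ₀) = 0
          rw [heq, smul_sub, hp2, h2, sub_zero]
      · intro y hy
        rw [mem_TSF] at hy
        rw [Finset.mem_filter, Finset.mem_product, mem_TSF, mem_TSF]
        refine ⟨⟨?_, ?_⟩, ?_⟩
        · show m • (σ₀ + y) = 0
          rw [smul_add, h1, nsmul_zero_of_dvd (Nat.gcd_dvd_left m n) hy, add_zero]
        · show n • (τ₀ - y) = 0
          rw [smul_sub, h2, nsmul_zero_of_dvd (Nat.gcd_dvd_right m n) hy, sub_zero]
        · show σ₀ + y + (τ₀ - y) = x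
          rw [← h3]; abel
      · rintro ⟨p1, p2⟩ hp
        rw [Finset.mem_filter] at hp
        have hps : p1 + p2 = x := hp.2
        have hfst : σ₀ + (p1 - σ₀) = p1 := by abel
        have hsnd : τ₀ - (p1 - σ₀) = p2 := by
          have h4 : τ₀ - (p1 - σ₀) - p2 = (σ₀ + τ₀) - (p1 + p2) := by abel
          rw [hps, h3, sub_self] at h4
          exact sub_eq_zero.mp h4
        show (σ₀ + (p1 - σ₀), τ₀ - (p1 - σ₀)) = (p1, p2)
        rw [hfst, hsnd]
      · intro y _
        show σ₀ + y - σ₀ = y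
        abel
    rw [hcard, TSF_card]
  have hSS : ∀ x y : GA r,
      x = ∑ σ ∈ TSF r m, AddMonoidAlgebra.single σ (1:ℚ) →
      y = ∑ τ ∈ TSF r n, AddMonoidAlgebra.single τ (1:ℚ) →
      x * y = ((Nat.gcd m n : ℚ) ^ r) •
        ∑ τ ∈ TSF r (Nat.lcm m n), (AddMonoidAlgebra.single τ (1:ℚ) : GA r) := by
    rintro x y rfl rfl
    rw [Finset.sum_mul_sum, ← Finset.sum_product']
    rw [Finset.sum_congr rfl fun p (_ : p ∈ TSF r m ×ˢ TSF r n) =>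
      single_mul_single' p.1 p.2 _ _ rfl rfl]
    rw [Finset.sum_comp (fun x : Gr r => (AddMonoidAlgebra.single x (1:ℚ) : GA r))
        (fun p : Gr r × Gr r => p.1 + p.2), himg]
    rw [Finset.sum_congr rfl fun x hx => by
      rw [hfib x hx, ← Nat.cast_smul_eq_nsmul ℚ, Nat.cast_pow]]
    rw [Finset.smul_sum]
  rw [Tor_eq r m, Tor_eq r n, Tor_eq r (Nat.lcm m n), smul_mul_smul_comm, hSS _ _ rfl rfl, smul_smul]
  congr 1
  have key : (m:ℚ)^r * (n:ℚ)^r = (Nat.gcd m n:ℚ)^r * (Nat.lcm m n:ℚ)^r := by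
    rw [← mul_pow, ← mul_pow, ← Nat.cast_mul, ← Nat.cast_mul, Nat.gcd_mul_lcm]
  have hg0 : ((Nat.gcd m n:ℚ))^r ≠ 0 := pow_ne_zero _ (Nat.cast_ne_zero.2 hg.ne')
  have hL0 : ((Nat.lcm m n:ℚ))^r ≠ 0 := pow_ne_zero _ (Nat.cast_ne_zero.2 hL.ne')
  rw [← mul_inv, key, mul_inv, mul_comm (((Nat.gcd m n:ℚ))^r)⁻¹, mul_assoc,
    inv_mul_cancel₀ hg0, mul_one]

/-- The refined divisor-sum `σ^δ_m(a) := ∑_{k ∣ a} (a/k)^m • T_{δ/gcd(δ,k)}`. -/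
noncomputable def sigmaRef (r δ m a : ℕ) : GA r :=
  ∑ k ∈ a.divisors, ((a / k : ℕ) : ℚ) ^ m • Tor r (δ / Nat.gcd δ k)


lemma sigmaRef_mul {r : ℕ} (m : ℕ) {δ₁ δ₂ a₁ a₂ : ℕ}
    (hδ₁ : 0 < δ₁) (hδ₂ : 0 < δ₂) (ha₁ : 0 < a₁) (ha₂ : 0 < a₂)
    (hcop : Nat.Coprime (δ₁ * a₁) (δ₂ * a₂)) :
    sigmaRef r (δ₁ * δ₂) m (a₁ * a₂) = sigmaRef r δ₁ m a₁ * sigmaRef r δ₂ m a₂ := by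
  classical
  have hδδ : Nat.Coprime δ₁ δ₂ :=
    Nat.Coprime.coprime_dvd_right (dvd_mul_right _ _)
      (Nat.Coprime.coprime_dvd_left (dvd_mul_right _ _) hcop)
  have hδ₁a₂ : Nat.Coprime δ₁ a₂ :=
    Nat.Coprime.coprime_dvd_right (dvd_mul_left _ _)
      (Nat.Coprime.coprime_dvd_left (dvd_mul_right _ _) hcop)
  have ha₁δ₂ : Nat.Coprime a₁ δ₂ :=
    Nat.Coprime.coprime_dvd_right (dvd_mul_right _ _)
      (Nat.Coprime.coprime_dvd_left (dvd_mul_left _ _) hcop)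
  have haa : Nat.Coprime a₁ a₂ :=
    Nat.Coprime.coprime_dvd_right (dvd_mul_left _ _)
      (Nat.Coprime.coprime_dvd_left (dvd_mul_left _ _) hcop)
  -- the right-hand side as a sum over a product finset
  have hterm : ∀ p : ℕ × ℕ, p.1 ∣ a₁ → p.2 ∣ a₂ →
      (((a₁ / p.1 : ℕ) : ℚ) ^ m • Tor r (δ₁ / Nat.gcd δ₁ p.1)) *
        (((a₂ / p.2 : ℕ) : ℚ) ^ m • Tor r (δ₂ / Nat.gcd δ₂ p.2))
      = ((((a₁ / p.1) * (a₂ / p.2) : ℕ)) : ℚ) ^ m •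
          Tor r ((δ₁ / Nat.gcd δ₁ p.1) * (δ₂ / Nat.gcd δ₂ p.2)) := by
    rintro ⟨k₁, k₂⟩ hk₁ hk₂
    have he₁ : 0 < δ₁ / Nat.gcd δ₁ k₁ :=
      Nat.div_pos (Nat.le_of_dvd hδ₁ (Nat.gcd_dvd_left _ _)) (Nat.gcd_pos_of_pos_left _ hδ₁)
    have he₂ : 0 < δ₂ / Nat.gcd δ₂ k₂ :=
      Nat.div_pos (Nat.le_of_dvd hδ₂ (Nat.gcd_dvd_left _ _)) (Nat.gcd_pos_of_pos_left _ hδ₂)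
    have hcop' : Nat.Coprime (δ₁ / Nat.gcd δ₁ k₁) (δ₂ / Nat.gcd δ₂ k₂) :=
      Nat.Coprime.coprime_dvd_right (Nat.div_dvd_of_dvd (Nat.gcd_dvd_left _ _))
        (Nat.Coprime.coprime_dvd_left (Nat.div_dvd_of_dvd (Nat.gcd_dvd_left _ _)) hδδ)
    rw [smul_mul_smul_comm, Tor_mul r he₁ he₂, Nat.Coprime.lcm_eq_mul hcop']
    congr 1
    push_cast [mul_pow]
    ring
  have hRHS : sigmaRef r δ₁ m a₁ * sigmaRef r δ₂ m a₂
      = ∑ p ∈ a₁.divisors ×ˢ a₂.divisors,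
          ((((a₁ / p.1) * (a₂ / p.2) : ℕ)) : ℚ) ^ m •
            Tor r ((δ₁ / Nat.gcd δ₁ p.1) * (δ₂ / Nat.gcd δ₂ p.2)) := by
    rw [sigmaRef, sigmaRef, Finset.sum_mul_sum, ← Finset.sum_product']
    exact Finset.sum_congr rfl fun p hp => by
      rw [Finset.mem_product, Nat.mem_divisors, Nat.mem_divisors] at hp
      exact hterm p hp.1.1 hp.2.1
  rw [sigmaRef, hRHS]
  refine Finset.sum_nbij' (fun k => (Nat.gcd k a₁, Nat.gcd k a₂)) (fun p => p.1 * p.2)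
    ?_ ?_ ?_ ?_ ?_
  · intro k hk
    rw [Nat.mem_divisors] at hk
    rw [Finset.mem_product, Nat.mem_divisors, Nat.mem_divisors]
    exact ⟨⟨Nat.gcd_dvd_right _ _, ha₁.ne'⟩, ⟨Nat.gcd_dvd_right _ _, ha₂.ne'⟩⟩
  · rintro ⟨k₁, k₂⟩ hp
    rw [Finset.mem_product, Nat.mem_divisors, Nat.mem_divisors] at hp
    rw [Nat.mem_divisors]
    exact ⟨mul_dvd_mul hp.1.1 hp.2.1, (mul_pos ha₁ ha₂).ne'⟩
  · intro k hk
    rw [Nat.mem_divisors] at hk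
    show Nat.gcd k a₁ * Nat.gcd k a₂ = k
    rw [← Nat.Coprime.gcd_mul k haa, Nat.gcd_eq_left hk.1]
  · rintro ⟨k₁, k₂⟩ hp
    rw [Finset.mem_product, Nat.mem_divisors, Nat.mem_divisors] at hp
    obtain ⟨⟨h1, -⟩, ⟨h2, -⟩⟩ := hp
    have hk₁k₂ : Nat.Coprime k₁ k₂ :=
      Nat.Coprime.coprime_dvd_right h2 (Nat.Coprime.coprime_dvd_left h1 haa)
    have e1 : Nat.gcd (k₁ * k₂) a₁ = k₁ := by
      rw [Nat.Coprime.gcd_mul_right_cancel k₁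
        (Nat.Coprime.coprime_dvd_left h2 haa.symm), Nat.gcd_eq_left h1]
    have e2 : Nat.gcd (k₁ * k₂) a₂ = k₂ := by
      rw [Nat.Coprime.gcd_mul_left_cancel k₂
        (Nat.Coprime.coprime_dvd_left h1 haa), Nat.gcd_eq_left h2]
    show ((k₁ * k₂).gcd a₁, (k₁ * k₂).gcd a₂) = (k₁, k₂)
    rw [e1, e2]
  · intro k hk
    rw [Nat.mem_divisors] at hk
    obtain ⟨hkdvd, -⟩ := hk
    set k₁ := Nat.gcd k a₁ with hk₁def
    set k₂ := Nat.gcd k a₂ with hk₂def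
    have h1 : k₁ ∣ a₁ := Nat.gcd_dvd_right _ _
    have h2 : k₂ ∣ a₂ := Nat.gcd_dvd_right _ _
    have hkeq : k₁ * k₂ = k := by
      rw [hk₁def, hk₂def, ← Nat.Coprime.gcd_mul k haa, Nat.gcd_eq_left hkdvd]
    have hg : Nat.gcd (δ₁ * δ₂) k = Nat.gcd δ₁ k₁ * Nat.gcd δ₂ k₂ := by
      rw [← hkeq, Nat.Coprime.gcd_mul _ (Nat.Coprime.coprime_dvd_right h2
        (Nat.Coprime.coprime_dvd_left h1 haa)),
        Nat.Coprime.gcd_mul_right_cancel δ₁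
          (Nat.Coprime.coprime_dvd_right h1 ha₁δ₂.symm),
        Nat.Coprime.gcd_mul_left_cancel δ₂
          (Nat.Coprime.coprime_dvd_right h2 hδ₁a₂)]
    have hda : a₁ * a₂ / k = (a₁ / k₁) * (a₂ / k₂) := by
      rw [← hkeq, Nat.div_mul_div_comm h1 h2]
    have hdδ : δ₁ * δ₂ / Nat.gcd (δ₁ * δ₂) k
        = (δ₁ / Nat.gcd δ₁ k₁) * (δ₂ / Nat.gcd δ₂ k₂) := by
      rw [hg, Nat.div_mul_div_comm (Nat.gcd_dvd_left _ _) (Nat.gcd_dvd_left _ _)]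
    simp only [hda, hdδ]

lemma sigmaRef_one_one (r m : ℕ) : sigmaRef r 1 m 1 = 1 := by
  rw [sigmaRef, Nat.divisors_one, Finset.sum_singleton]
  simp [Tor_one]

lemma sigmaRef_factorization (r m : ℕ) :
    ∀ N δ a : ℕ, 0 < δ → 0 < a → δ * a = N →
    sigmaRef r δ m a =
      ∏ p ∈ (δ * a).primeFactors,
        sigmaRef r (p ^ (δ.factorization p)) m (p ^ (a.factorization p)) := by
  intro N
  induction N using Nat.strong_induction_on with
  | _ N ih =>
    intro δ a hδ ha hN
    by_cases h1 : δ * a = 1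
    · have hδ1 : δ = 1 := Nat.eq_one_of_mul_eq_one_right h1
      have ha1 : a = 1 := Nat.eq_one_of_mul_eq_one_left h1
      subst hδ1; subst ha1
      simp [sigmaRef_one_one]
    · obtain ⟨p, hp, hpd⟩ := Nat.exists_prime_and_dvd h1
      set e := δ.factorization p with he
      set f := a.factorization p with hf
      set δ' := δ / p ^ e with hδ'
      set a' := a / p ^ f with ha'
      have hδsplit : p ^ e * δ' = δ := Nat.ordProj_mul_ordCompl_eq_self δ p
      have hasplit : p ^ f * a' = a := Nat.ordProj_mul_ordCompl_eq_self a p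
      have hδ'pos : 0 < δ' := Nat.ordCompl_pos p hδ.ne'
      have ha'pos : 0 < a' := Nat.ordCompl_pos p ha.ne'
      have hpδ' : ¬ p ∣ δ' := Nat.not_dvd_ordCompl hp hδ.ne'
      have hpa' : ¬ p ∣ a' := Nat.not_dvd_ordCompl hp ha.ne'
      have hpδa : ¬ p ∣ δ' * a' := by
        intro hd
        rcases (Nat.Prime.dvd_mul hp).mp hd with h | h
        · exact hpδ' h
        · exact hpa' h
      have hcop : Nat.Coprime (p ^ e * p ^ f) (δ' * a') := by
        rw [← pow_add]
        exact Nat.Coprime.pow_left _ ((Nat.Prime.coprime_iff_not_dvd hp).mpr hpδa)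
      have hNsplit : δ * a = p ^ (e + f) * (δ' * a') := by
        rw [← hδsplit, ← hasplit, pow_add]; ring
      have hef : e + f ≠ 0 := by
        intro h0
        have he0 : e = 0 := by omega
        have hf0 : f = 0 := by omega
        rw [he0, hf0] at hNsplit
        simp at hNsplit
        exact hpδa (hNsplit ▸ hpd)
      have hlt : δ' * a' < N := by
        rw [← hN, hNsplit]
        have h2 : 1 < p ^ (e + f) := Nat.one_lt_pow hef hp.one_lt
        calc δ' * a' = 1 * (δ' * a') := (one_mul _).symm
        _ < p ^ (e + f) * (δ' * a') :=
          Nat.mul_lt_mul_of_lt_of_le h2 le_rfl (mul_pos hδ'pos ha'pos)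
      have hmain : sigmaRef r δ m a
          = sigmaRef r (p ^ e) m (p ^ f) * sigmaRef r δ' m a' := by
        conv_lhs => rw [← hδsplit, ← hasplit]
        exact sigmaRef_mul m (pow_pos hp.pos e) hδ'pos (pow_pos hp.pos f) ha'pos hcop
      have hih := ih (δ' * a') hlt δ' a' hδ'pos ha'pos rfl
      have hpnot : p ∉ (δ' * a').primeFactors := by
        intro hmem
        exact hpδa (Nat.dvd_of_mem_primeFactors hmem)
      have hPF : (δ * a).primeFactors = insert p ((δ' * a').primeFactors) := by
        rw [hNsplit, Nat.primeFactors_mul (pow_ne_zero _ hp.pos.ne')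
          (mul_pos hδ'pos ha'pos).ne', Nat.primeFactors_pow _ hef, hp.primeFactors]
        rw [Finset.insert_eq]
      have hfacδ : ∀ q ∈ (δ' * a').primeFactors, δ.factorization q = δ'.factorization q := by
        intro q hq
        have hqp : q ≠ p := fun h => hpnot (h ▸ hq)
        rw [← hδsplit, Nat.factorization_mul (pow_ne_zero _ hp.pos.ne') hδ'pos.ne']
        rw [Finsupp.add_apply, hp.factorization_pow, Finsupp.single_apply,
          if_neg (fun h => hqp h.symm), zero_add]
      have hfaca : ∀ q ∈ (δ' * a').primeFactors, a.factorization q = a'.factorization q := by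
        intro q hq
        have hqp : q ≠ p := fun h => hpnot (h ▸ hq)
        rw [← hasplit, Nat.factorization_mul (pow_ne_zero _ hp.pos.ne') ha'pos.ne']
        rw [Finsupp.add_apply, hp.factorization_pow, Finsupp.single_apply,
          if_neg (fun h => hqp h.symm), zero_add]
      rw [hmain, hih, hPF, Finset.prod_insert hpnot]
      congr 1
      exact Finset.prod_congr rfl fun q hq => by rw [hfacδ q hq, hfaca q hq]

/-- The refined divisor-sum is multiplicative:
`σ^δ_m(a) = ∏_{p ∣ δ·a prime} σ^{p^{ν_p(δ)}}_m(p^{ν_p(a)})`. -/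
theorem statement5 (r : ℕ) (hr : 1 ≤ r) (δ a m : ℕ) (hδ : 1 ≤ δ) (ha : 1 ≤ a) :
    sigmaRef r δ m a =
      ∏ p ∈ (δ * a).primeFactors,
        sigmaRef r (p ^ (δ.factorization p)) m (p ^ (a.factorization p)) :=
  sigmaRef_factorization r m (δ * a) δ a hδ ha rfl

end
end

section
/- The sequence δ ↦ σ^δ_m(δ·a) satisfies the 0-multiple-cover formula; explicitly, for all integers δ, a ≥ 1 and every integer m ≥ 0, σ^δ_m(δ·a) = ∑_{l | δ} ( ∑_{k | l·a, gcd(k,l) = 1} (l·a/k)^m ) · T_l in 𝒢. In particular σ^δ_m(δa) lies in the ℚ-span of (T_l)_{l | δ}, and its coefficient on T_δ in this basis equals ∑_{k | a, gcd(k,δ)=1} (δa/k)^m. -/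
noncomputable section

/-- The sequence `δ ↦ σ^δ_m(δ·a)` satisfies the 0-multiple-cover formula:
`σ^δ_m(δ·a) = ∑_{l ∣ δ} (∑_{k ∣ l·a, gcd(k,l) = 1} (l·a/k)^m) • T_l`.
In particular `σ^δ_m(δa)` lies in the ℚ-span of `(T_l)_{l ∣ δ}`. -/
theorem statement6 (r : ℕ) (hr : 1 ≤ r) (δ a m : ℕ) (hδ : 1 ≤ δ) (ha : 1 ≤ a) :
    sigmaRef r δ m (δ * a) =
      ∑ l ∈ δ.divisors,
        (∑ k ∈ (l * a).divisors.filter (fun k => Nat.gcd k l = 1),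
          ((l * a / k : ℕ) : ℚ) ^ m) • Tor r l ∧
    sigmaRef r δ m (δ * a) ∈
      Submodule.span ℚ {x : GA r | ∃ l ∈ δ.divisors, x = Tor r l} := by
  have hδ0 : δ ≠ 0 := by omega
  have ha0 : a ≠ 0 := by omega
  have key : sigmaRef r δ m (δ * a) =
      ∑ l ∈ δ.divisors,
        (∑ k ∈ (l * a).divisors.filter (fun k => Nat.gcd k l = 1),
          ((l * a / k : ℕ) : ℚ) ^ m) • Tor r l := by
    unfold sigmaRef
    have hmaps : ∀ k ∈ (δ * a).divisors, δ / Nat.gcd δ k ∈ δ.divisors := by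
      intro k hk
      exact Nat.mem_divisors.2 ⟨Nat.div_dvd_of_dvd (Nat.gcd_dvd_left δ k), hδ0⟩
    rw [← Finset.sum_fiberwise_of_maps_to hmaps]
    refine Finset.sum_congr rfl fun l hl => ?_
    obtain ⟨hld, _⟩ := Nat.mem_divisors.1 hl
    have hl0 : 0 < l := Nat.pos_of_mem_divisors hl
    set d := δ / l with hd
    have hld' : l * d = δ := Nat.mul_div_cancel' hld
    have hd0 : 0 < d := by
      rcases Nat.eq_zero_or_pos d with h | h
      · rw [h, Nat.mul_zero] at hld'; omega
      · exact h
    have hgcd : ∀ k ∈ (δ * a).divisors.filter (fun k => δ / Nat.gcd δ k = l),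
        Nat.gcd δ k = d := by
      intro k hk
      obtain ⟨hk1, hk2⟩ := Finset.mem_filter.1 hk
      have hg : Nat.gcd δ k ∣ δ := Nat.gcd_dvd_left δ k
      have : l * Nat.gcd δ k = δ := by rw [← hk2]; exact Nat.div_mul_cancel hg
      have := hld'.trans this.symm
      exact (Nat.eq_of_mul_eq_mul_left hl0 this.symm)
    have hstep : ∀ k ∈ (δ * a).divisors.filter (fun k => δ / Nat.gcd δ k = l),
        ((δ * a / k : ℕ) : ℚ) ^ m • Tor r (δ / Nat.gcd δ k)
          = ((δ * a / k : ℕ) : ℚ) ^ m • Tor r l := by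
      intro k hk
      rw [(Finset.mem_filter.1 hk).2]
    rw [Finset.sum_congr rfl hstep, ← Finset.sum_smul]
    congr 1
    refine Finset.sum_nbij' (fun k => k / d) (fun k' => d * k') ?_ ?_ ?_ ?_ ?_
    · intro k hk
      have hgk : Nat.gcd δ k = d := hgcd k hk
      obtain ⟨hk1, _⟩ := Finset.mem_filter.1 hk
      obtain ⟨hkdvd, hda0⟩ := Nat.mem_divisors.1 hk1
      have hdk : d ∣ k := hgk ▸ Nat.gcd_dvd_right δ k
      have hkd : d * (k / d) = k := Nat.mul_div_cancel' hdk
      have hdvd : k / d ∣ l * a := by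
        have : d * (k / d) ∣ d * (l * a) := by
          rw [hkd]
          have : δ * a = d * (l * a) := by rw [← hld']; ring
          exact this ▸ hkdvd
        exact (Nat.mul_dvd_mul_iff_left hd0).1 this
      have hcop : Nat.gcd (k / d) l = 1 := by
        have : Nat.gcd (d * l) (d * (k / d)) = d * Nat.gcd l (k / d) :=
          Nat.gcd_mul_left d l (k / d)
        rw [hkd, Nat.mul_comm d l, hld'] at this
        rw [hgk] at this
        have h1 : Nat.gcd l (k / d) = 1 := by
          nlinarith [this, hd0]
        rw [Nat.gcd_comm] at h1; exact h1
      exact Finset.mem_filter.2 ⟨Nat.mem_divisors.2 ⟨hdvd, by positivity⟩, hcop⟩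
    · intro k' hk'
      obtain ⟨hk1, hcop⟩ := Finset.mem_filter.1 hk'
      obtain ⟨hdvd, _⟩ := Nat.mem_divisors.1 hk1
      have hg : Nat.gcd δ (d * k') = d := by
        have : Nat.gcd (d * l) (d * k') = d * Nat.gcd l k' := Nat.gcd_mul_left d l k'
        rw [Nat.mul_comm d l, hld', Nat.gcd_comm l k', hcop, Nat.mul_one] at this
        exact this
      refine Finset.mem_filter.2 ⟨Nat.mem_divisors.2 ⟨?_, by positivity⟩, ?_⟩
      · have : δ * a = d * (l * a) := by rw [← hld']; ring
        rw [this]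
        exact Nat.mul_dvd_mul_left d hdvd
      · rw [hg, ← hld', Nat.mul_div_cancel _ hd0]
    · intro k hk
      have hgk : Nat.gcd δ k = d := hgcd k hk
      have hdk : d ∣ k := hgk ▸ Nat.gcd_dvd_right δ k
      exact Nat.mul_div_cancel' hdk
    · intro k' hk'
      exact Nat.mul_div_cancel_left k' hd0
    · intro k hk
      have hgk : Nat.gcd δ k = d := hgcd k hk
      have hdk : d ∣ k := hgk ▸ Nat.gcd_dvd_right δ k
      have hkd : d * (k / d) = k := Nat.mul_div_cancel' hdk
      have : δ * a / k = l * a / (k / d) := by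
        conv_lhs => rw [← hkd, ← hld']
        rw [show l * d * a = d * (l * a) by ring]
        exact Nat.mul_div_mul_left (l * a) (k / d) hd0
      rw [this]
  refine ⟨key, ?_⟩
  rw [key]
  refine Submodule.sum_mem _ fun l hl => Submodule.smul_mem _ _ ?_
  exact Submodule.subset_span ⟨l, hl, rfl⟩

end
end

section
/- Vanishing of the Möbius-twisted refined count of pairs for non-cyclic cotype: for every n ≥ 1 and all d₁ | d₂ | n with d₁ > 1, one has ∑_{K ≤ Z_n²} ∑_{H ≤ K, H of cotype (d₁,d₂)} μ(H,K) · T_K = 0 in ℚ[Z_n²], where the outer sum runs over all additive subgroups K of Z_n² and the inner sum over all additive subgroups H of K whose cotype in Z_n² is (d₁,d₂). -/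
noncomputable section

/-- `T_K := |K|⁻¹ • ∑_{θ ∈ K} (θ)` in the group algebra `ℚ[Z_n²]`. -/
noncomputable def TK (n : ℕ) (K : AddSubgroup (ZMod n × ZMod n)) :
    AddMonoidAlgebra ℚ (ZMod n × ZMod n) :=
  (Nat.card K : ℚ)⁻¹ •
    ∑ᶠ θ ∈ (K : Set (ZMod n × ZMod n)), AddMonoidAlgebra.single θ (1 : ℚ)

/-- A subgroup `H ≤ Z_n²` has cotype `(d₁,d₂)` if `Z_n²/H ≃ ZMod d₁ × ZMod d₂`
as additive groups. -/
def HasCotype (n : ℕ) (H : AddSubgroup (ZMod n × ZMod n)) (d₁ d₂ : ℕ) : Prop :=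
  Nonempty (((ZMod n × ZMod n) ⧸ H) ≃+ (ZMod d₁ × ZMod d₂))

namespace Stmt15Aux

open Finset
open scoped Classical

variable {G : Type*} [AddCommGroup G]

/-- The kernel of an additive character, as an `AddSubgroup`. -/
def aker (ψ : AddChar G ℂ) : AddSubgroup G where
  carrier := {x | ψ x = 1}
  zero_mem' := ψ.map_zero_eq_one
  add_mem' := by
    intro a b ha hb
    simp only [Set.mem_setOf_eq] at *
    rw [ψ.map_add_eq_mul, ha, hb, one_mul]
  neg_mem' := by
    intro a ha
    simp only [Set.mem_setOf_eq] at *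
    rw [AddChar.map_neg_eq_inv, ha, inv_one]

lemma mem_aker {ψ : AddChar G ℂ} {x : G} : x ∈ aker ψ ↔ ψ x = 1 := Iff.rfl

/-- Lift a character vanishing on `K` to the quotient `G ⧸ K`. -/
def liftChar (K : AddSubgroup G) (ψ : AddChar G ℂ) (h : K ≤ aker ψ) :
    AddChar (G ⧸ K) ℂ where
  toFun q := Quotient.liftOn' q ψ (by
    intro a b hab
    have h1 : ψ (-a + b) = 1 := h (QuotientAddGroup.leftRel_apply.mp hab)
    have h2 := ψ.map_add_eq_mul a (-a + b)
    rw [add_neg_cancel_left, h1, mul_one] at h2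
    exact h2.symm)
  map_zero_eq_one' := ψ.map_zero_eq_one
  map_add_eq_mul' := by
    intro a b
    refine Quotient.inductionOn₂' a b (fun x y => ?_)
    exact ψ.map_add_eq_mul x y

@[simp] lemma liftChar_mk (K : AddSubgroup G) (ψ : AddChar G ℂ) (h : K ≤ aker ψ) (x : G) :
    liftChar K ψ h (QuotientAddGroup.mk x) = ψ x := rfl

variable [Finite G]

/-- Orthogonality: summing characters whose kernel contains `K` at a point `x`. -/
lemma sum_filter_ker (K : AddSubgroup G) (x : G) :
    ∑ ψ ∈ Finset.univ.filter (fun ψ : AddChar G ℂ => K ≤ aker ψ), ψ x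
      = if x ∈ K then (Nat.card (G ⧸ K) : ℂ) else 0 := by
  cases nonempty_fintype G
  letI : Fintype (G ⧸ K) := Fintype.ofFinite _
  have hbij : ∑ ψ ∈ Finset.univ.filter (fun ψ : AddChar G ℂ => K ≤ aker ψ), ψ x
      = ∑ χ : AddChar (G ⧸ K) ℂ, χ (QuotientAddGroup.mk x) := by
    refine Finset.sum_bij' (fun ψ hψ => liftChar K ψ ((Finset.mem_filter.mp hψ).2))
      (fun χ _ => χ.compAddMonoidHom (QuotientAddGroup.mk' K)) ?_ ?_ ?_ ?_ ?_
    · intro ψ hψ; exact Finset.mem_univ _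
    · intro χ _
      refine Finset.mem_filter.mpr ⟨Finset.mem_univ _, ?_⟩
      intro k hk
      show χ (QuotientAddGroup.mk' K k) = 1
      have : (QuotientAddGroup.mk' K) k = 0 := (QuotientAddGroup.eq_zero_iff k).mpr hk
      rw [this, χ.map_zero_eq_one]
    · intro ψ hψ; ext y; rfl
    · intro χ _
      ext q
      refine Quotient.inductionOn' q (fun y => ?_)
      rfl
    · intro ψ hψ; rfl
  rw [hbij, AddChar.sum_apply_eq_ite, Nat.card_eq_fintype_card]
  congr 1
  · rw [eq_iff_iff]
    exact QuotientAddGroup.eq_zero_iff x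

end Stmt15Aux

namespace Stmt15Aux

open Finset
open scoped Classical

/-- Dual Möbius identity obtained from the defining one by matrix inversion. -/
lemma mobius_dual {V : Type*} [Fintype V] [PartialOrder V]
    (μ : V → V → ℤ)
    (hμ₁ : ∀ H, μ H H = 1)
    (hμ₂ : ∀ H K : V, H < K →
      ∑ L ∈ Finset.univ.filter (fun L => H ≤ L ∧ L ≤ K), μ L K = 0)
    (H M : V) :
    ∑ L ∈ Finset.univ.filter (fun L => H ≤ L ∧ L ≤ M), (μ H L : ℂ)
      = if H = M then 1 else 0 := by
  classical
  let Z : Matrix V V ℂ := Matrix.of (fun A B => if A ≤ B then 1 else 0)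
  let Md : Matrix V V ℂ := Matrix.of (fun A B => if A ≤ B then (μ A B : ℂ) else 0)
  have entry : ∀ A B L : V, Z A L * Md L B
      = if (A ≤ L ∧ L ≤ B) then (μ L B : ℂ) else 0 := by
    intro A B L
    show (if A ≤ L then (1:ℂ) else 0) * (if L ≤ B then (μ L B : ℂ) else 0) = _
    split_ifs with h1 h2 h3 h4 h5 <;> simp_all <;> tauto
  have key : Z * Md = 1 := by
    ext A B
    rw [Matrix.mul_apply, Matrix.one_apply]
    rw [Finset.sum_congr rfl (fun L _ => entry A B L), ← Finset.sum_filter]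
    rcases eq_or_ne A B with rfl | hne
    · have hset : Finset.univ.filter (fun L => A ≤ L ∧ L ≤ A) = {A} := by
        ext L
        simp only [Finset.mem_filter, Finset.mem_univ, true_and, Finset.mem_singleton]
        constructor
        · rintro ⟨h1, h2⟩; exact le_antisymm h2 h1
        · rintro rfl; exact ⟨le_rfl, le_rfl⟩
      rw [hset, Finset.sum_singleton, if_pos rfl, hμ₁]
      norm_num
    · rw [if_neg hne]
      by_cases hAB : A ≤ B
      · have hlt : A < B := lt_of_le_of_ne hAB hne
        have h0 := hμ₂ A B hlt
        have : ((∑ L ∈ Finset.univ.filter (fun L => A ≤ L ∧ L ≤ B), μ L B : ℤ) : ℂ) = 0 := by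
          rw [h0]; norm_num
        rw [← this]
        push_cast
        rfl
      · have hset : Finset.univ.filter (fun L => A ≤ L ∧ L ≤ B) = ∅ := by
          ext L
          simp only [Finset.mem_filter, Finset.mem_univ, true_and, Finset.notMem_empty,
            iff_false, not_and]
          intro h1 h2
          exact hAB (h1.trans h2)
        rw [hset, Finset.sum_empty]
  have key2 : Md * Z = 1 := mul_eq_one_comm.mp key
  have h2 : (Md * Z) H M = (1 : Matrix V V ℂ) H M := by rw [key2]
  rw [Matrix.mul_apply, Matrix.one_apply] at h2
  rw [← h2, Finset.sum_filter]
  refine Finset.sum_congr rfl (fun L _ => ?_)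
  show (if H ≤ L ∧ L ≤ M then (μ H L : ℂ) else 0)
      = (if H ≤ L then (μ H L : ℂ) else 0) * (if L ≤ M then (1:ℂ) else 0)
  split_ifs with h1 h2 h3 h4 h5 <;> simp_all <;> tauto

/-- No complex character of `Z_n²` has kernel exactly `H` if the quotient by `H`
is `ZMod d₁ × ZMod d₂` with `1 < d₁ ∣ d₂`. -/
lemma no_ker (n d₁ d₂ : ℕ) [NeZero n] (h₁ : d₁ ∣ d₂) (hd₂ : d₂ ≠ 0) (hd₁ : 1 < d₁)
    (H : AddSubgroup (ZMod n × ZMod n)) (hH : HasCotype n H d₁ d₂)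
    (ψ : AddChar (ZMod n × ZMod n) ℂ) : aker ψ ≠ H := by
  intro hk
  obtain ⟨e⟩ := hH
  haveI : NeZero d₁ := ⟨by omega⟩
  haveI : NeZero d₂ := ⟨hd₂⟩
  subst hk
  set G := ZMod n × ZMod n
  set χ := liftChar (aker ψ) ψ le_rfl with hχ
  have hψne : ∀ a : G, ψ a ≠ 0 := by
    intro a h0
    have := ψ.map_add_eq_mul a (-a)
    rw [add_neg_cancel, ψ.map_zero_eq_one, h0, zero_mul] at this
    exact one_ne_zero this
  have hinj : Function.Injective χ := by
    intro q q'
    refine Quotient.inductionOn₂' q q' (fun a b hab => ?_)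
    have hab' : ψ a = ψ b := hab
    have h1 : ψ (-a + b) = 1 := by
      rw [ψ.map_add_eq_mul, AddChar.map_neg_eq_inv, hab']
      exact inv_mul_cancel₀ (hψne b)
    exact Quotient.sound' (QuotientAddGroup.leftRel_apply.mpr h1)
  set g : ZMod d₁ × ZMod d₂ → ℂ := fun y => χ (e.symm y) with hg
  have hginj : Function.Injective g := hinj.comp e.symm.injective
  have hsmul : ∀ y : ZMod d₁ × ZMod d₂, d₂ • y = 0 := by
    intro y
    have hy1 : d₂ • y.1 = 0 := by
      rw [nsmul_eq_mul, show ((d₂ : ℕ) : ZMod d₁) = 0 from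
        (ZMod.natCast_eq_zero_iff d₂ d₁).mpr h₁, zero_mul]
    have hy2 : d₂ • y.2 = 0 := by
      rw [nsmul_eq_mul, ZMod.natCast_self, zero_mul]
    have : d₂ • y = (d₂ • y.1, d₂ • y.2) := rfl
    rw [this, hy1, hy2]
    rfl
  have hroot : ∀ y, g y ^ d₂ = 1 := by
    intro y
    have : g y ^ d₂ = χ (d₂ • e.symm y) := (χ.map_nsmul_eq_pow d₂ _).symm
    rw [this, ← map_nsmul, hsmul, map_zero, χ.map_zero_eq_one]
  have hcard : Fintype.card (ZMod d₁ × ZMod d₂) ≤ d₂ := by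
    have hmem : ∀ y : ZMod d₁ × ZMod d₂, g y ∈ (Polynomial.nthRoots d₂ (1:ℂ)).toFinset := by
      intro y
      rw [Multiset.mem_toFinset, Polynomial.mem_nthRoots (Nat.pos_of_ne_zero hd₂)]
      exact hroot y
    calc Fintype.card (ZMod d₁ × ZMod d₂) = Finset.univ.card := (Finset.card_univ).symm
      _ ≤ (Polynomial.nthRoots d₂ (1:ℂ)).toFinset.card :=
          Finset.card_le_card_of_injOn g (fun y _ => hmem y) hginj.injOn
      _ ≤ Multiset.card (Polynomial.nthRoots d₂ (1:ℂ)) := Multiset.toFinset_card_le _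
      _ ≤ d₂ := Polynomial.card_nthRoots d₂ (1:ℂ)
  rw [Fintype.card_prod, ZMod.card, ZMod.card] at hcard
  have hd₂pos : 0 < d₂ := Nat.pos_of_ne_zero hd₂
  nlinarith

lemma TK_apply (n : ℕ) [NeZero n] (K : AddSubgroup (ZMod n × ZMod n))
    (x : ZMod n × ZMod n) :
    (TK n K).coeff x = (Nat.card K : ℚ)⁻¹ * (if x ∈ K then 1 else 0) := by
  classical
  unfold TK
  rw [show (K : Set (ZMod n × ZMod n)) = ↑((K : Set (ZMod n × ZMod n)).toFinset) from
    (Set.coe_toFinset _).symm, finsum_mem_coe_finset]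
  rw [AddMonoidAlgebra.coeff_smul, Finsupp.smul_apply, AddMonoidAlgebra.coeff_sum, Finsupp.finset_sum_apply]
  simp_rw [AddMonoidAlgebra.coeff_single, Finsupp.single_apply]
  rw [Finset.sum_ite_eq' _ x (fun _ => (1:ℚ))]
  simp only [Set.mem_toFinset, SetLike.mem_coe, smul_eq_mul]

end Stmt15Aux

open Stmt15Aux Finset in
/-- Vanishing of the Möbius-twisted refined count of pairs for non-cyclic
cotype: for `d₁ ∣ d₂ ∣ n` with `d₁ > 1`, for the Möbius function `μ` of the
lattice of additive subgroups of `Z_n²` (characterized by `μ(H,H) = 1` and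
`∑_{L : H ≤ L ≤ K} μ(L,K) = 0` for `H` a proper subgroup of `K`), one has
`∑_{K} ∑_{H ≤ K, H of cotype (d₁,d₂)} μ(H,K) • T_K = 0`. -/
theorem statement15 (n d₁ d₂ : ℕ) (hn : 1 ≤ n)
    (h₁ : d₁ ∣ d₂) (h₂ : d₂ ∣ n) (hd₁ : 1 < d₁)
    (μ : AddSubgroup (ZMod n × ZMod n) → AddSubgroup (ZMod n × ZMod n) → ℤ)
    (hμ₁ : ∀ H, μ H H = 1)
    (hμ₂ : ∀ H K : AddSubgroup (ZMod n × ZMod n), H < K →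
      (∑ᶠ L ∈ {L : AddSubgroup (ZMod n × ZMod n) | H ≤ L ∧ L ≤ K}, μ L K) = 0) :
    (∑ᶠ K : AddSubgroup (ZMod n × ZMod n),
      ∑ᶠ H ∈ {H : AddSubgroup (ZMod n × ZMod n) |
          H ≤ K ∧ HasCotype n H d₁ d₂}, (μ H K : ℚ) • TK n K) = 0 := by
  classical
  haveI : NeZero n := ⟨by omega⟩
  set G := ZMod n × ZMod n with hG
  haveI : Finite (AddSubgroup G) :=
    Finite.of_injective (fun K : AddSubgroup G => (K : Set G)) SetLike.coe_injective
  letI : Fintype (AddSubgroup G) := Fintype.ofFinite _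
  have hd₂ : d₂ ≠ 0 := by rintro rfl; omega
  -- Finset form of the Möbius recursion
  have hμ₂' : ∀ H K : AddSubgroup G, H < K →
      ∑ L ∈ Finset.univ.filter (fun L => H ≤ L ∧ L ≤ K), μ L K = 0 := by
    intro H K h
    have h0 := hμ₂ H K h
    rwa [show {L : AddSubgroup G | H ≤ L ∧ L ≤ K}
        = ↑(Finset.univ.filter (fun L => H ≤ L ∧ L ≤ K)) by ext L; simp,
      finsum_mem_coe_finset] at h0
  -- convert goal to Finset sums
  rw [finsum_eq_sum_of_fintype]
  have hinner : ∀ K : AddSubgroup G,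
      (∑ᶠ H ∈ {H : AddSubgroup G | H ≤ K ∧ HasCotype n H d₁ d₂}, (μ H K : ℚ) • TK n K)
      = ∑ H ∈ Finset.univ.filter (fun H => H ≤ K ∧ HasCotype n H d₁ d₂),
          (μ H K : ℚ) • TK n K := by
    intro K
    rw [show {H : AddSubgroup G | H ≤ K ∧ HasCotype n H d₁ d₂}
        = ↑(Finset.univ.filter (fun H => H ≤ K ∧ HasCotype n H d₁ d₂)) by ext H; simp,
      finsum_mem_coe_finset]
  rw [Finset.sum_congr rfl (fun K _ => hinner K)]
  -- swap the two sums
  rw [Finset.sum_comm' (t' := Finset.univ.filter (fun H => HasCotype n H d₁ d₂))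
    (s' := fun H => Finset.univ.filter (fun K => H ≤ K))
    (by intro K H; simp only [Finset.mem_filter, Finset.mem_univ, true_and]; try tauto)]
  refine Finset.sum_eq_zero (fun H hH => ?_)
  have hHcot : HasCotype n H d₁ d₂ := (Finset.mem_filter.mp hH).2
  -- coefficientwise
  refine AddMonoidAlgebra.coeff_injective (Finsupp.ext (fun x => ?_))
  rw [AddMonoidAlgebra.coeff_sum, Finset.sum_apply', AddMonoidAlgebra.coeff_zero, Finsupp.zero_apply]
  have hterm : ∀ K ∈ Finset.univ.filter (fun K : AddSubgroup G => H ≤ K),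
      ((μ H K : ℚ) • TK n K).coeff x
        = (μ H K : ℚ) * ((Nat.card K : ℚ)⁻¹ * (if x ∈ K then 1 else 0)) := by
    intro K _
    rw [AddMonoidAlgebra.coeff_smul_apply, TK_apply, smul_eq_mul]
  rw [Finset.sum_congr rfl hterm]
  -- pass to ℂ
  have hC : ∑ K ∈ Finset.univ.filter (fun K : AddSubgroup G => H ≤ K),
      (μ H K : ℂ) * ((Nat.card K : ℂ)⁻¹ * (if x ∈ K then 1 else 0)) = 0 := by
    have hGcard : (Nat.card G : ℂ) ≠ 0 := by
      simp [Nat.card_pos.ne']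
    refine mul_left_cancel₀ hGcard ?_
    rw [mul_zero, Finset.mul_sum]
    have hterm2 : ∀ K ∈ Finset.univ.filter (fun K : AddSubgroup G => H ≤ K),
        (Nat.card G : ℂ) * ((μ H K : ℂ) * ((Nat.card K : ℂ)⁻¹ * (if x ∈ K then 1 else 0)))
          = ∑ ψ ∈ Finset.univ.filter (fun ψ : AddChar G ℂ => K ≤ aker ψ),
              (μ H K : ℂ) * ψ x := by
      intro K _
      rw [← Finset.mul_sum, sum_filter_ker]
      have hq : (Nat.card G : ℂ) = (Nat.card (G ⧸ K) : ℂ) * (Nat.card K : ℂ) := by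
        exact_mod_cast congrArg (Nat.cast : ℕ → ℂ)
          (AddSubgroup.card_eq_card_quotient_mul_card_addSubgroup K)
      have hK0 : (Nat.card K : ℂ) ≠ 0 := by
        simp [Nat.card_pos.ne']
      split_ifs with h
      · rw [hq]
        field_simp
        try ring
      · simp
    rw [Finset.sum_congr rfl hterm2]
    -- swap sums: over K then ψ  ⇒  over ψ then K
    rw [Finset.sum_comm' (t' := (Finset.univ : Finset (AddChar G ℂ)))
      (s' := fun ψ => Finset.univ.filter (fun K => H ≤ K ∧ K ≤ aker ψ))
      (by intro K ψ; simp only [Finset.mem_filter, Finset.mem_univ, true_and]; try tauto)]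
    refine Finset.sum_eq_zero (fun ψ _ => ?_)
    have : ∑ K ∈ Finset.univ.filter (fun K => H ≤ K ∧ K ≤ aker ψ), (μ H K : ℂ) * ψ x
        = (∑ K ∈ Finset.univ.filter (fun K => H ≤ K ∧ K ≤ aker ψ), (μ H K : ℂ)) * ψ x := by
      rw [Finset.sum_mul]
    rw [this, mobius_dual μ hμ₁ hμ₂' H (aker ψ),
      if_neg (fun h => no_ker n d₁ d₂ h₁ hd₂ hd₁ H hHcot ψ h.symm), zero_mul]
  have hcast : ((∑ K ∈ Finset.univ.filter (fun K : AddSubgroup G => H ≤ K),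
      (μ H K : ℚ) * ((Nat.card K : ℚ)⁻¹ * (if x ∈ K then 1 else 0)) : ℚ) : ℂ)
      = ∑ K ∈ Finset.univ.filter (fun K : AddSubgroup G => H ≤ K),
        (μ H K : ℂ) * ((Nat.card K : ℂ)⁻¹ * (if x ∈ K then 1 else 0)) := by
    push_cast
    refine Finset.sum_congr rfl (fun K _ => ?_)
    split_ifs <;> push_cast <;> ring
  have : ((∑ K ∈ Finset.univ.filter (fun K : AddSubgroup G => H ≤ K),
      (μ H K : ℚ) * ((Nat.card K : ℚ)⁻¹ * (if x ∈ K then 1 else 0)) : ℚ) : ℂ) = 0 := by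
    rw [hcast, hC]
  exact_mod_cast this

end
end

section
/- Closed formula for the Möbius-twisted refined count of pairs with cyclic cotype: for every n ≥ 1 and every divisor d of n, ∑_{K ≤ Z_n²} ∑_{H ≤ K, Z_n²/H cyclic of order d} μ(H,K) · T_K = ∑_{k | d} μ(k) · T_{(n/d)·k} in ℚ[Z_n²], where the outer sum runs over all additive subgroups K of Z_n², the inner sum over all additive subgroups H of K such that the quotient Z_n²/H is cyclic of order d, and μ(k) on the right-hand side is the number-theoretic Möbius function. -/
open scoped Classical

noncomputable section

/-- The `k`-torsion subgroup `{x ∈ Z_n² : k • x = 0}`. -/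
def torsionSub (n k : ℕ) : AddSubgroup (ZMod n × ZMod n) where
  carrier := {x | k • x = 0}
  zero_mem' := smul_zero k
  add_mem' := by
    intro a b ha hb
    simp only [Set.mem_setOf_eq, smul_add] at *
    rw [ha, hb, add_zero]
  neg_mem' := by
    intro a ha
    simp only [Set.mem_setOf_eq, smul_neg] at *
    rw [ha, neg_zero]

/-- `T_k := T_K` for `K` the `k`-torsion subgroup of `Z_n²`. -/
noncomputable def Tk (n k : ℕ) : AddMonoidAlgebra ℚ (ZMod n × ZMod n) :=
  TK n (torsionSub n k)

/-! ### Auxiliary material -/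

lemma finsum_mem_eq_sum_ite {α M : Type*} [Fintype α] [AddCommMonoid M]
    (s : Set α) (f : α → M) :
    (∑ᶠ a ∈ s, f a) = ∑ a : α, if a ∈ s then f a else 0 := by
  rw [finsum_mem_def, finsum_eq_sum_of_fintype]
  simp [Set.indicator_apply]

lemma mobius_right_inverse {α : Type*} [Fintype α] [PartialOrder α]
    (μ : α → α → ℤ)
    (h1 : ∀ H, μ H H = 1)
    (h2 : ∀ H K : α, H < K → (∑ L : α, if H ≤ L ∧ L ≤ K then (μ L K : ℂ) else 0) = 0) :
    ∀ H N : α, (∑ K : α, if H ≤ K ∧ K ≤ N then (μ H K : ℂ) else 0) = if H = N then 1 else 0 := by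
  classical
  set Z : Matrix α α ℂ := fun A B => if A ≤ B then 1 else 0 with hZ
  set M : Matrix α α ℂ := fun A B => if A ≤ B then (μ A B : ℂ) else 0 with hM
  have hZM : Z * M = 1 := by
    ext H K
    rw [Matrix.mul_apply]
    have : ∀ L, Z H L * M L K = if H ≤ L ∧ L ≤ K then (μ L K : ℂ) else 0 := by
      intro L; simp only [hZ, hM]; split_ifs with p q r <;> simp_all
    simp only [this]
    rcases eq_or_ne H K with rfl | hne
    · rw [Matrix.one_apply_eq, Finset.sum_eq_single H]
      · simp [h1]
      · intro L _ hL
        rw [if_neg]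
        rintro ⟨a, b⟩; exact hL (le_antisymm b a)
      · simp
    · rw [Matrix.one_apply_ne hne]
      by_cases hle : H ≤ K
      · exact h2 H K (lt_of_le_of_ne hle hne)
      · apply Finset.sum_eq_zero
        intro L _
        rw [if_neg]
        rintro ⟨a, b⟩; exact hle (a.trans b)
  have hMZ : M * Z = 1 := mul_eq_one_comm.mp hZM
  intro H N
  have hcf := congrFun (congrFun hMZ H) N
  rw [Matrix.mul_apply] at hcf
  have h2' : ∀ K, M H K * Z K N = if H ≤ K ∧ K ≤ N then (μ H K : ℂ) else 0 := by
    intro K; simp only [hZ, hM]; split_ifs with p q r <;> simp_all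
  simp only [h2'] at hcf
  rw [hcf, Matrix.one_apply]

abbrev G2 (n : ℕ) := ZMod n × ZMod n

def Bp (n : ℕ) (ψ : G2 n) : G2 n →+ ZMod n where
  toFun x := ψ.1 * x.1 + ψ.2 * x.2
  map_zero' := by simp
  map_add' x y := by simp [Prod.fst_add, Prod.snd_add, mul_add]; ring

lemma Bp_apply (n : ℕ) (ψ x : G2 n) : Bp n ψ x = ψ.1 * x.1 + ψ.2 * x.2 := rfl

section Chars

variable (n : ℕ) [NeZero n]

def E : AddChar (ZMod n) ℂ :=
  AddChar.zmodChar n (Complex.isPrimitiveRoot_exp n (NeZero.ne n)).pow_eq_one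

lemma E_prim : (E n).IsPrimitive :=
  AddChar.zmodChar_primitive_of_primitive_root n (Complex.isPrimitiveRoot_exp n (NeZero.ne n))

lemma E_eq_one_iff (a : ZMod n) : E n a = 1 ↔ a = 0 :=
  (E_prim n).zmod_char_eq_one_iff n a

lemma E_sum (s : ZMod n) : ∑ t : ZMod n, E n (t * s) = if s = 0 then (n : ℂ) else 0 := by
  rw [AddChar.sum_mulShift s (E_prim n)]
  split_ifs <;> simp [ZMod.card]

lemma sum_subgroup (K : AddSubgroup (G2 n)) (ψ : G2 n) :
    ∑ θ : K, E n (Bp n ψ θ) =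
      if K ≤ (Bp n ψ).ker then (Nat.card K : ℂ) else 0 := by
  set χ : AddChar K ℂ := (E n).compAddMonoidHom ((Bp n ψ).comp K.subtype) with hχ
  have hχap : ∀ θ : K, χ θ = E n (Bp n ψ θ) := fun θ => rfl
  split_ifs with h
  · rw [Nat.card_eq_fintype_card]
    rw [← Finset.card_univ, Finset.card_eq_sum_ones]
    push_cast
    apply Finset.sum_congr rfl
    intro θ _
    have : Bp n ψ θ = 0 := h θ.2
    rw [this, AddChar.map_zero_eq_one]
  · have hne : χ ≠ 1 := by
      rw [AddChar.ne_one_iff]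
      simp only [SetLike.le_def, AddMonoidHom.mem_ker, not_forall] at h
      obtain ⟨x, hx, hx0⟩ := h
      exact ⟨⟨x, hx⟩, fun hc => hx0 ((E_eq_one_iff n _).mp hc)⟩
    have := AddChar.sum_eq_zero_of_ne_one hne
    rw [← this]
    exact Finset.sum_congr rfl fun θ _ => (hχap θ).symm

def Phi (ψ : G2 n) : AddMonoidAlgebra ℚ (G2 n) →ₗ[ℚ] ℂ where
  toFun f := ∑ θ : G2 n, (f.coeff θ : ℂ) * E n (Bp n ψ θ)
  map_add' f g := by
    have h : ∀ θ, (f + g).coeff θ = f.coeff θ + g.coeff θ := fun _ => rfl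
    simp only [h]
    push_cast
    simp [add_mul, Finset.sum_add_distrib]
  map_smul' q f := by
    have h : ∀ θ, (q • f).coeff θ = q * f.coeff θ := fun _ => rfl
    simp only [h, RingHom.id_apply, Rat.smul_def, Finset.mul_sum]
    push_cast
    simp [mul_assoc]

lemma Phi_apply (ψ : G2 n) (f : AddMonoidAlgebra ℚ (G2 n)) :
    Phi n ψ f = ∑ θ : G2 n, (f.coeff θ : ℂ) * E n (Bp n ψ θ) := rfl

lemma Phi_TK (ψ : G2 n) (K : AddSubgroup (G2 n)) :
    Phi n ψ (TK n K) = if K ≤ (Bp n ψ).ker then 1 else 0 := by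
  have h1 : TK n K = (Nat.card K : ℚ)⁻¹ •
      ∑ θ ∈ (K : Set (G2 n)).toFinset, AddMonoidAlgebra.single θ (1 : ℚ) := by
    rw [TK]
    congr 1
    rw [← finsum_mem_coe_finset]
    simp
  rw [h1, map_smul, map_sum]
  have h2 : ∀ θ : G2 n, Phi n ψ (AddMonoidAlgebra.single θ (1:ℚ)) = E n (Bp n ψ θ) := by
    intro θ
    rw [Phi_apply]
    rw [Finset.sum_eq_single θ]
    · simp
    · intro b _ hb; simp [Finsupp.single_apply, Ne.symm hb]
    · simp
  simp only [h2]
  have h3 : ∑ θ ∈ (K : Set (G2 n)).toFinset, E n (Bp n ψ θ) =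
      ∑ θ : K, E n (Bp n ψ θ) := by
    rw [← Finset.sum_set_coe]
    exact Fintype.sum_equiv (Equiv.refl _) _ _ (fun _ => rfl)
  rw [h3, sum_subgroup]
  have hc : (Nat.card K : ℂ) ≠ 0 := by
    have : 0 < Nat.card K := Nat.card_pos
    exact_mod_cast this.ne'
  rw [Rat.smul_def]
  split_ifs with h
  · push_cast
    rw [inv_mul_cancel₀ hc]
  · simp

lemma E_sum_G2 (x : G2 n) :
    ∑ ψ : G2 n, E n (Bp n ψ x) = if x = 0 then ((n : ℂ))^2 else 0 := by
  have : ∀ ψ : G2 n, E n (Bp n ψ x) = E n (ψ.1 * x.1) * E n (ψ.2 * x.2) := by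
    intro ψ; rw [Bp_apply, AddChar.map_add_eq_mul]
  simp only [this]
  rw [Fintype.sum_prod_type]
  simp only
  rw [← Finset.sum_mul_sum]
  rw [E_sum, E_sum]
  rcases eq_or_ne x 0 with rfl | hx
  · simp [sq]
  · have : x.1 ≠ 0 ∨ x.2 ≠ 0 := by
      by_contra hc
      push_neg at hc
      exact hx (Prod.ext hc.1 hc.2)
    rw [if_neg hx]
    rcases this with h | h
    · rw [if_neg h, zero_mul]
    · rw [if_neg h, mul_zero]

lemma Phi_inj (f g : AddMonoidAlgebra ℚ (G2 n)) (h : ∀ ψ, Phi n ψ f = Phi n ψ g) : f = g := by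
  ext θ0
  have key : ∑ ψ : G2 n, (Phi n ψ f - Phi n ψ g) * E n (Bp n ψ (-θ0)) = 0 := by
    simp [h]
  have expand : ∀ (u : AddMonoidAlgebra ℚ (G2 n)),
      ∑ ψ : G2 n, Phi n ψ u * E n (Bp n ψ (-θ0)) = (u.coeff θ0 : ℂ) * (n:ℂ)^2 := by
    intro u
    simp only [Phi_apply, Finset.sum_mul]
    rw [Finset.sum_comm]
    have : ∀ θ ψ, (u.coeff θ : ℂ) * E n (Bp n ψ θ) * E n (Bp n ψ (-θ0)) =
        (u.coeff θ : ℂ) * E n (Bp n ψ (θ - θ0)) := by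
      intro θ ψ
      rw [mul_assoc, ← AddChar.map_add_eq_mul, ← map_add, sub_eq_add_neg]
    simp only [this, ← Finset.mul_sum, E_sum_G2]
    rw [Finset.sum_eq_single θ0]
    · simp
    · intro b _ hb
      rw [if_neg (by simpa [sub_eq_zero] using hb), mul_zero]
    · simp
  simp only [sub_mul, Finset.sum_sub_distrib, expand] at key
  have hfg := sub_eq_zero.mp key
  have hn2 : ((n:ℂ))^2 ≠ 0 :=
    pow_ne_zero 2 (Nat.cast_ne_zero.mpr (NeZero.ne n))
  have := mul_right_cancel₀ hn2 hfg
  exact_mod_cast this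

lemma card_range_eq_addOrderOf (ψ : G2 n) :
    Nat.card (Bp n ψ).range = addOrderOf ψ := by
  set R := (Bp n ψ).range with hR
  have hcyc : IsAddCyclic R := inferInstance
  set c := Nat.card R with hc
  have hc0 : 0 < c := Nat.card_pos
  have h1 : addOrderOf ψ ∣ c := by
    rw [addOrderOf_dvd_iff_nsmul_eq_zero]
    have k1 : ψ.1 ∈ R := ⟨(1, 0), by simp [Bp_apply]⟩
    have k2 : ψ.2 ∈ R := ⟨(0, 1), by simp [Bp_apply]⟩
    have hcf : c = Fintype.card R := by rw [hc, Nat.card_eq_fintype_card]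
    have e1 : c • (⟨ψ.1, k1⟩ : R) = 0 := by
      rw [hcf]; exact card_nsmul_eq_zero
    have e2 : c • (⟨ψ.2, k2⟩ : R) = 0 := by
      rw [hcf]; exact card_nsmul_eq_zero
    have f1 : c • ψ.1 = 0 := by
      have := congrArg (Subtype.val) e1
      simpa using this
    have f2 : c • ψ.2 = 0 := by
      have := congrArg (Subtype.val) e2
      simpa using this
    exact Prod.ext f1 f2
  have h2 : c ∣ addOrderOf ψ := by
    rw [hc, ← IsAddCyclic.exponent_eq_card]
    rw [AddMonoid.exponent_dvd_iff_forall_nsmul_eq_zero]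
    rintro ⟨t, ht⟩
    obtain ⟨y, rfl⟩ := ht
    have hsm : addOrderOf ψ • ψ = 0 := addOrderOf_nsmul_eq_zero ψ
    have hs1 : addOrderOf ψ • ψ.1 = 0 := by
      have := congrArg Prod.fst hsm; simpa using this
    have hs2 : addOrderOf ψ • ψ.2 = 0 := by
      have := congrArg Prod.snd hsm; simpa using this
    apply Subtype.ext
    show addOrderOf ψ • (Bp n ψ y) = 0
    rw [Bp_apply, smul_add, ← smul_mul_assoc, ← smul_mul_assoc, hs1, hs2, zero_mul,
      zero_mul, add_zero]
  exact Nat.dvd_antisymm h2 h1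

lemma cotype_iff (ψ : G2 n) (d : ℕ) (hd : d ≠ 0) :
    Nonempty ((G2 n ⧸ (Bp n ψ).ker) ≃+ ZMod d) ↔ addOrderOf ψ = d := by
  have ι := QuotientAddGroup.quotientKerEquivRange (Bp n ψ)
  have e2 : ZMod (Nat.card (Bp n ψ).range) ≃+ (Bp n ψ).range :=
    zmodAddCyclicAddEquiv inferInstance
  rw [card_range_eq_addOrderOf n ψ] at e2
  constructor
  · rintro ⟨q⟩
    have comp : ZMod (addOrderOf ψ) ≃+ ZMod d :=
      (e2.trans ι.symm).trans q
    have := Nat.card_congr comp.toEquiv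
    rwa [Nat.card_zmod, Nat.card_zmod] at this
  · rintro rfl
    exact ⟨ι.trans e2.symm⟩

lemma torsion_mem_iff (N : ℕ) (x : G2 n) :
    (N • x = 0) ↔ (N • x.1 = 0 ∧ N • x.2 = 0) := by
  constructor
  · intro h
    exact ⟨by have := congrArg Prod.fst h; simpa using this,
           by have := congrArg Prod.snd h; simpa using this⟩
  · rintro ⟨h1, h2⟩
    exact Prod.ext (by simpa using h1) (by simpa using h2)

lemma exists_of_smul_eq_zero (a r : ℕ) (har : a * r = n) (ha : a ≠ 0) (t : ZMod n)
    (ht : a • t = 0) : ∃ s : ZMod n, t = (r : ZMod n) * s := by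
  have h1 : ((a * t.val : ℕ) : ZMod n) = 0 := by
    push_cast
    rw [ZMod.natCast_val, ZMod.cast_id]
    simpa [nsmul_eq_mul] using ht
  rw [ZMod.natCast_eq_zero_iff] at h1
  have h3 : a * r ∣ a * t.val := by rw [har]; exact h1
  have h2 : r ∣ t.val := (mul_dvd_mul_iff_left ha).mp h3
  obtain ⟨s, hs⟩ := h2
  refine ⟨(s : ZMod n), ?_⟩
  have : t = ((t.val : ℕ) : ZMod n) := by rw [ZMod.natCast_val, ZMod.cast_id]
  rw [this, hs]
  push_cast
  ring

lemma torsion_le_ker_iff (d k : ℕ) (hdn : d ∣ n) (hk : k ∣ d) (hk0 : k ≠ 0) (ψ : G2 n)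
    (tors : AddSubgroup (G2 n)) (htors : ∀ x, x ∈ tors ↔ (n / d * k) • x = 0) :
    tors ≤ (Bp n ψ).ker ↔ (d / k) • ψ = 0 := by
  have hn0 : n ≠ 0 := NeZero.ne n
  set m := n / d with hm
  set r := d / k with hr
  have hkr : k * r = d := Nat.mul_div_cancel' hk
  have hmd : m * d = n := Nat.div_mul_cancel hdn
  have hmk0 : m * k ≠ 0 := by
    have : m ≠ 0 := by
      intro h; rw [h, zero_mul] at hmd; exact hn0 hmd.symm
    exact mul_ne_zero this hk0
  have hmkr : (m * k) * r = n := by rw [mul_assoc, hkr, hmd]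
  constructor
  · intro h
    have key : ∀ t : ZMod n, (m * k) • ((r : ZMod n) * t) = 0 := by
      intro t
      rw [nsmul_eq_mul]
      rw [show ((m*k : ℕ) : ZMod n) * ((r:ZMod n) * t) = (((m*k)*r : ℕ) : ZMod n) * t by
        push_cast; ring]
      rw [hmkr, ZMod.natCast_self, zero_mul]
    have m1 : ((r : ZMod n), (0 : ZMod n)) ∈ tors := by
      rw [htors, torsion_mem_iff]
      exact ⟨by simpa using key 1, by simp⟩
    have m2 : ((0 : ZMod n), (r : ZMod n)) ∈ tors := by
      rw [htors, torsion_mem_iff]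
      exact ⟨by simp, by simpa using key 1⟩
    have b1 := h m1
    have b2 := h m2
    rw [AddMonoidHom.mem_ker, Bp_apply] at b1 b2
    simp only [mul_zero, add_zero, zero_add, mul_one] at b1 b2
    rw [torsion_mem_iff]
    constructor
    · rw [nsmul_eq_mul, mul_comm]; simpa using b1
    · rw [nsmul_eq_mul, mul_comm]; simpa using b2
  · intro h x hx
    rw [htors x, torsion_mem_iff] at hx
    obtain ⟨s1, hs1⟩ := exists_of_smul_eq_zero n (m*k) r hmkr hmk0 x.1 hx.1
    obtain ⟨s2, hs2⟩ := exists_of_smul_eq_zero n (m*k) r hmkr hmk0 x.2 hx.2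
    rw [torsion_mem_iff] at h
    have h1 : (r : ZMod n) * ψ.1 = 0 := by
      have := h.1; rwa [nsmul_eq_mul] at this
    have h2 : (r : ZMod n) * ψ.2 = 0 := by
      have := h.2; rwa [nsmul_eq_mul] at this
    rw [AddMonoidHom.mem_ker, Bp_apply, hs1, hs2]
    calc ψ.1 * ((r:ZMod n) * s1) + ψ.2 * ((r:ZMod n) * s2)
        = ((r:ZMod n) * ψ.1) * s1 + ((r:ZMod n) * ψ.2) * s2 := by ring
      _ = 0 := by rw [h1, h2, zero_mul, zero_mul, add_zero]

end Chars

lemma moebius_delta (a d : ℕ) (hd : d ≠ 0) (ha : a ≠ 0) :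
    (∑ k ∈ d.divisors, ((ArithmeticFunction.moebius k : ℤ) : ℂ) * (if a ∣ d / k then 1 else 0))
      = if a = d then 1 else 0 := by
  by_cases had : a ∣ d
  · have key : ∀ k ∈ d.divisors, (a ∣ d / k) ↔ (k ∣ d / a) := by
      intro k hk
      rw [Nat.mem_divisors] at hk
      rw [Nat.dvd_div_iff_mul_dvd hk.1, Nat.dvd_div_iff_mul_dvd had, mul_comm]
    have hcong : (∑ k ∈ d.divisors, ((ArithmeticFunction.moebius k : ℤ) : ℂ) *
        (if a ∣ d / k then 1 else 0)) =
        ∑ k ∈ d.divisors, ((ArithmeticFunction.moebius k : ℤ) : ℂ) *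
        (if k ∣ d / a then 1 else 0) :=
      Finset.sum_congr rfl (fun k hk => by simp only [key k hk])
    rw [hcong]
    have hda0 : d / a ≠ 0 := by
      intro h
      rw [Nat.div_eq_zero_iff, or_iff_right ha] at h
      exact absurd (Nat.le_of_dvd (Nat.pos_of_ne_zero hd) had) (not_le.mpr h)
    have hfilter : d.divisors.filter (· ∣ d / a) = (d / a).divisors := by
      ext k
      simp only [Finset.mem_filter, Nat.mem_divisors]
      constructor
      · rintro ⟨⟨_, _⟩, h2⟩; exact ⟨h2, hda0⟩
      · rintro ⟨h1, _⟩
        exact ⟨⟨h1.trans (Nat.div_dvd_of_dvd had), hd⟩, h1⟩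
    have step : (∑ k ∈ d.divisors, ((ArithmeticFunction.moebius k : ℤ) : ℂ) *
        (if k ∣ d / a then 1 else 0)) =
        ∑ k ∈ (d/a).divisors, ((ArithmeticFunction.moebius k : ℤ) : ℂ) := by
      simp only [mul_ite, mul_one, mul_zero]
      rw [← Finset.sum_filter, hfilter]
    rw [step]
    have hz : (∑ k ∈ (d/a).divisors, (ArithmeticFunction.moebius k : ℤ)) =
        if d / a = 1 then 1 else 0 := by
      have h1 := congrArg (fun f : ArithmeticFunction ℤ => f (d/a))
        ArithmeticFunction.moebius_mul_coe_zeta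
      rw [ArithmeticFunction.coe_mul_zeta_apply, ArithmeticFunction.one_apply] at h1
      exact h1
    have hcast : (∑ k ∈ (d/a).divisors, ((ArithmeticFunction.moebius k : ℤ) : ℂ)) =
        ((∑ k ∈ (d/a).divisors, (ArithmeticFunction.moebius k : ℤ) : ℤ) : ℂ) := by
      push_cast; ring
    rw [hcast, hz]
    have hiff : d / a = 1 ↔ a = d := by
      constructor
      · intro h
        have := Nat.eq_mul_of_div_eq_right had h
        omega
      · rintro rfl
        exact Nat.div_self (Nat.pos_of_ne_zero ha)
    split_ifs with p q q <;> simp_all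
  · rw [if_neg (show a ≠ d from fun h => had (h ▸ dvd_refl d))]
    apply Finset.sum_eq_zero
    intro k hk
    rw [Nat.mem_divisors] at hk
    rw [if_neg, mul_zero]
    intro hcon
    exact had (hcon.trans (Nat.div_dvd_of_dvd hk.1))

/-- Closed formula for the Möbius-twisted refined count of pairs with cyclic
cotype: for `d ∣ n` and `μ` the Möbius function of the lattice of additive
subgroups of `Z_n²` (characterized by `μ(H,H) = 1` and
`∑_{L : H ≤ L ≤ K} μ(L,K) = 0` for `H` a proper subgroup of `K`),
`∑_{K} ∑_{H ≤ K, Z_n²/H cyclic of order d} μ(H,K) • T_K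
  = ∑_{k ∣ d} μ(k) • T_{(n/d)·k}`, where `μ(k)` on the right-hand side is the
number-theoretic Möbius function. -/
theorem statement16 (n d : ℕ) (hn : 1 ≤ n) (hd : d ∣ n)
    (μ : AddSubgroup (ZMod n × ZMod n) → AddSubgroup (ZMod n × ZMod n) → ℤ)
    (hμ₁ : ∀ H, μ H H = 1)
    (hμ₂ : ∀ H K : AddSubgroup (ZMod n × ZMod n), H < K →
      (∑ᶠ L ∈ {L : AddSubgroup (ZMod n × ZMod n) | H ≤ L ∧ L ≤ K}, μ L K) = 0) :
    (∑ᶠ K : AddSubgroup (ZMod n × ZMod n),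
      ∑ᶠ H ∈ {H : AddSubgroup (ZMod n × ZMod n) |
          H ≤ K ∧ Nonempty (((ZMod n × ZMod n) ⧸ H) ≃+ ZMod d)},
        (μ H K : ℚ) • TK n K) =
      ∑ k ∈ d.divisors,
        ((ArithmeticFunction.moebius k : ℤ) : ℚ) • Tk n ((n / d) * k) := by
  haveI : NeZero n := ⟨by omega⟩
  haveI : Finite (AddSubgroup (G2 n)) :=
    Finite.of_injective (fun K => (K : Set (G2 n))) SetLike.coe_injective
  haveI fin : Fintype (AddSubgroup (G2 n)) := Fintype.ofFinite _
  have hd0 : d ≠ 0 := by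
    rintro rfl
    rw [Nat.zero_dvd] at hd
    omega
  apply Phi_inj n
  intro ψ
  set N := (Bp n ψ).ker with hN
  set a := addOrderOf ψ with ha
  have ha0 : a ≠ 0 := (addOrderOf_pos ψ).ne'
  set cyc : AddSubgroup (G2 n) → Prop :=
    fun H => Nonempty ((G2 n ⧸ H) ≃+ ZMod d) with hcyc
  -- the Möbius matrix inversion
  have h2' : ∀ H K : AddSubgroup (G2 n), H < K →
      (∑ L : AddSubgroup (G2 n), if H ≤ L ∧ L ≤ K then (μ L K : ℂ) else 0) = 0 := by
    intro H K hHK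
    have h := hμ₂ H K hHK
    rw [finsum_mem_eq_sum_ite] at h
    have h' : (∑ L : AddSubgroup (G2 n), if H ≤ L ∧ L ≤ K then μ L K else 0) = 0 := by
      refine Eq.trans ?_ h
      apply Finset.sum_congr rfl
      intro L _
      by_cases hL : H ≤ L ∧ L ≤ K
      · rw [if_pos hL, if_pos (show L ∈ {L : AddSubgroup (G2 n) | H ≤ L ∧ L ≤ K} from hL)]
      · rw [if_neg hL, if_neg (show L ∉ {L : AddSubgroup (G2 n) | H ≤ L ∧ L ≤ K} from hL)]
    have hc : (∑ L : AddSubgroup (G2 n), if H ≤ L ∧ L ≤ K then ((μ L K : ℤ) : ℂ) else 0)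
        = ((∑ L : AddSubgroup (G2 n), if H ≤ L ∧ L ≤ K then μ L K else 0 : ℤ) : ℂ) := by
      push_cast [apply_ite (fun z : ℤ => (z : ℂ))]
      rfl
    rw [hc, h', Int.cast_zero]
  have hδ := mobius_right_inverse μ hμ₁ h2'
  -- LHS computation
  have hL : Phi n ψ (∑ᶠ K : AddSubgroup (G2 n),
      ∑ᶠ H ∈ {H : AddSubgroup (G2 n) | H ≤ K ∧ cyc H}, (μ H K : ℚ) • TK n K)
      = if cyc N then 1 else 0 := by
    rw [finsum_eq_sum_of_fintype, map_sum]
    have step1 : ∀ K : AddSubgroup (G2 n),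
        Phi n ψ (∑ᶠ H ∈ {H : AddSubgroup (G2 n) | H ≤ K ∧ cyc H}, (μ H K : ℚ) • TK n K)
        = ∑ H : AddSubgroup (G2 n),
            if H ≤ K ∧ cyc H
            then ((μ H K : ℤ) : ℂ) * (if K ≤ N then 1 else 0) else 0 := by
      intro K
      rw [finsum_mem_eq_sum_ite, map_sum]
      apply Finset.sum_congr rfl
      intro H _
      rw [apply_ite (Phi n ψ), map_zero, map_smul, Phi_TK, Rat.smul_def]
      simp only [Set.mem_setOf_eq]
      split_ifs with p q <;> push_cast <;> simp
    rw [Finset.sum_congr rfl (fun K _ => step1 K), Finset.sum_comm]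
    have step2 : ∀ H : AddSubgroup (G2 n),
        (∑ K : AddSubgroup (G2 n),
          if H ≤ K ∧ cyc H then ((μ H K : ℤ) : ℂ) * (if K ≤ N then 1 else 0) else 0)
        = if cyc H then (if H = N then 1 else 0) else 0 := by
      intro H
      by_cases hc : cyc H
      · rw [if_pos hc, ← hδ H N]
        apply Finset.sum_congr rfl
        intro K _
        split_ifs with p q r r <;> simp_all
      · rw [if_neg hc]
        apply Finset.sum_eq_zero
        intro K _
        rw [if_neg (by tauto)]
    rw [Finset.sum_congr rfl (fun H _ => step2 H)]
    rw [Finset.sum_eq_single N]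
    · split_ifs <;> simp
    · intro H _ hH
      split_ifs with p q <;> simp_all
    · simp
  have hLfinal : Phi n ψ (∑ᶠ K : AddSubgroup (G2 n),
      ∑ᶠ H ∈ {H : AddSubgroup (G2 n) | H ≤ K ∧ cyc H}, (μ H K : ℚ) • TK n K)
      = if a = d then 1 else 0 := by
    rw [hL]
    have : cyc N ↔ a = d := cotype_iff n ψ d hd0
    split_ifs with p q q <;> simp_all
  -- RHS computation
  have hR : Phi n ψ (∑ k ∈ d.divisors,
        ((ArithmeticFunction.moebius k : ℤ) : ℚ) • Tk n ((n / d) * k))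
      = if a = d then 1 else 0 := by
    rw [map_sum]
    have term : ∀ k ∈ d.divisors,
        Phi n ψ (((ArithmeticFunction.moebius k : ℤ) : ℚ) • Tk n ((n / d) * k))
        = ((ArithmeticFunction.moebius k : ℤ) : ℂ) * (if a ∣ d / k then 1 else 0) := by
      intro k hk
      obtain ⟨hkd, -⟩ := Nat.mem_divisors.mp hk
      have hk0 : k ≠ 0 := (Nat.pos_of_mem_divisors hk).ne'
      rw [map_smul, Rat.smul_def, Tk, Phi_TK]
      have hiff : (torsionSub n ((n / d) * k) ≤ N) ↔ (a ∣ d / k) := by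
        rw [torsion_le_ker_iff n d k hd hkd hk0 ψ (torsionSub n ((n/d)*k))
          (fun x => Iff.rfl)]
        exact (addOrderOf_dvd_iff_nsmul_eq_zero).symm
      rw [if_congr hiff rfl rfl]
      push_cast
      ring
    rw [Finset.sum_congr rfl term]
    exact moebius_delta a d hd0 ha0
  rw [hLfinal, hR]
end
end

section
/- For every n ≥ 1, every divisor ω of n, and every additive subgroup K ≤ Z_n² with quotient map q : Z_n² → Z_n²/K, the ω-twisted average T_K(ω) := (1/[Z_n² : K]) · ∑_{φ} (1/|K|) · ∑_{x ∈ Z_n², q(x) = φ((n/ω) mod n)} (x), where the outer sum runs over all additive group homomorphisms φ : ZMod n →+ Z_n²/K, satisfies T_K(ω) = T_K · T_ω in ℚ[Z_n²]. -/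
noncomputable section

namespace St17Aux

open Finset

/-- Summing a function composed with an `AddMonoidHom` between finite groups:
it equals `card (ker f)` times the sum over the range. -/
theorem sum_comp_hom {A B M : Type*} [AddCommGroup A] [AddCommGroup B] [Fintype A] [Fintype B]
    [DecidableEq B] [AddCommMonoid M] (f : A →+ B) (g : B → M) :
    ∑ z : A, g (f z) = ∑ b ∈ Finset.univ.image f, Nat.card f.ker • g b := by
  rw [Finset.sum_comp]
  refine Finset.sum_congr rfl fun b hb => ?_
  congr 1
  obtain ⟨a₀, -, rfl⟩ := Finset.mem_image.mp hb
  have e : f.ker ≃ {a // f a = f a₀} :=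
    { toFun := fun k => ⟨a₀ + k.1, by
        have := AddMonoidHom.mem_ker.mp k.2
        simp [this]⟩
      invFun := fun a => ⟨a.1 - a₀, by
        simp [AddMonoidHom.mem_ker, a.2]⟩
      left_inv := fun k => by ext; simp
      right_inv := fun a => by ext; simp }
  rw [Nat.card_congr e, Nat.card_eq_fintype_card, Fintype.card_subtype]

theorem nsmul_self_zmod_sq (n : ℕ) (z : ZMod n × ZMod n) : n • z = 0 := by
  have h : ∀ a : ZMod n, n • a = 0 := fun a => by
    rw [nsmul_eq_mul, ZMod.natCast_self, zero_mul]
  ext <;> simp [h]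

theorem ev_bijective (n : ℕ) (A : Type*) [AddCommGroup A] (hA : ∀ a : A, n • a = 0) :
    Function.Bijective (fun φ : ZMod n →+ A => φ (1 : ZMod n)) := by
  constructor
  · intro φ ψ h
    ext x
    have key : ∀ k : ℤ, φ (k : ZMod n) = ψ (k : ZMod n) := by
      intro k
      rw [show ((k : ZMod n)) = k • (1 : ZMod n) by simp, map_zsmul, map_zsmul]
      exact congrArg (k • ·) h
    obtain ⟨k, rfl⟩ := ZMod.intCast_surjective x
    exact key k
  · intro a
    refine ⟨ZMod.lift n ⟨zmultiplesHom A a, ?_⟩, ?_⟩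
    · simpa using hA a
    · have := ZMod.lift_coe n ⟨zmultiplesHom A a, by simpa using hA a⟩ 1
      simpa using this

theorem exists_of_torsion (n ω : ℕ) (hn : 1 ≤ n) (hω : ω ∣ n) (a : ZMod n)
    (h : ω • a = 0) : ∃ b : ZMod n, (n / ω) • b = a := by
  haveI : NeZero n := ⟨by omega⟩
  have hω0 : 0 < ω := Nat.pos_of_dvd_of_pos hω hn
  obtain ⟨c, rfl⟩ : ∃ c : ℕ, ((c : ℕ) : ZMod n) = a := ⟨a.val, ZMod.natCast_zmod_val a⟩
  have h2 : ((ω * c : ℕ) : ZMod n) = 0 := by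
    push_cast
    rw [← nsmul_eq_mul]; exact h
  rw [ZMod.natCast_eq_zero_iff] at h2
  obtain ⟨m, hm⟩ := hω
  have hmdvd : m ∣ c := (Nat.mul_dvd_mul_iff_left hω0).mp (hm ▸ h2)
  obtain ⟨d, rfl⟩ := hmdvd
  refine ⟨(d : ZMod n), ?_⟩
  have hq : n / ω = m := by rw [hm]; exact Nat.mul_div_cancel_left m hω0
  rw [hq, nsmul_eq_mul]
  push_cast
  ring

end St17Aux

open Finset St17Aux in
set_option maxHeartbeats 2000000 in
/-- The `ω`-twisted average
`T_K(ω) := [Z_n² : K]⁻¹ • ∑_{φ : ZMod n →+ Z_n²/K} |K|⁻¹ • ∑_{x : q(x) = φ(n/ω)} (x)`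
equals `T_K · T_ω`. -/
theorem statement17 (n ω : ℕ) (hn : 1 ≤ n) (hω : ω ∣ n)
    (K : AddSubgroup (ZMod n × ZMod n)) :
    ((K.index : ℚ)⁻¹ •
      ∑ᶠ φ : ZMod n →+ ((ZMod n × ZMod n) ⧸ K),
        (Nat.card K : ℚ)⁻¹ •
          ∑ᶠ x ∈ {x : ZMod n × ZMod n |
              QuotientAddGroup.mk' K x = φ (((n / ω : ℕ) : ZMod n))},
            AddMonoidAlgebra.single x (1 : ℚ)) = TK n K * Tk n ω := by
  classical
  haveI : NeZero n := ⟨by omega⟩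
  haveI : Fintype ((ZMod n × ZMod n) ⧸ K) := Fintype.ofFinite _
  haveI : Finite (ZMod n →+ (ZMod n × ZMod n) ⧸ K) :=
    Finite.of_injective _ (DFunLike.coe_injective)
  haveI : Fintype (ZMod n →+ (ZMod n × ZMod n) ⧸ K) := Fintype.ofFinite _
  set G := ZMod n × ZMod n
  set Q := G ⧸ K with hQdef
  set q : G →+ Q := QuotientAddGroup.mk' K with hqdef
  set m : ℕ := n / ω with hmdef
  set T : AddSubgroup G := torsionSub n ω with hTdef
  set mhom : G →+ G := AddMonoidHom.mk' (fun z => m • z) (fun a b => smul_add m a b) with hmhomdef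
  set Kf : Finset G := (K : Set G).toFinset with hKfdef
  set Tf : Finset G := (T : Set G).toFinset with hTfdef
  have hωpos : 0 < ω := Nat.pos_of_dvd_of_pos hω hn
  have hωm : ω * m = n := Nat.mul_div_cancel' hω
  set k : ℕ := Nat.card K with hkdef
  set t : ℕ := Nat.card T with htdef
  set ck : ℕ := Nat.card mhom.ker with hckdef
  -- the range of mhom is T
  have hrange : mhom.range = T := by
    ext x
    simp only [AddMonoidHom.mem_range]
    constructor
    · rintro ⟨z, rfl⟩
      show ω • (mhom z) = 0
      show ω • (m • z) = 0
      rw [← mul_nsmul, mul_comm m ω, hωm]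
      exact nsmul_self_zmod_sq n z
    · intro hx
      have hx' : ω • x = 0 := hx
      have h1 : ω • x.1 = 0 := by
        rw [← Prod.smul_fst]; exact congrArg Prod.fst hx'
      have h2 : ω • x.2 = 0 := by
        rw [← Prod.smul_snd]; exact congrArg Prod.snd hx'
      obtain ⟨b1, hb1⟩ := exists_of_torsion n ω hn hω x.1 h1
      obtain ⟨b2, hb2⟩ := exists_of_torsion n ω hn hω x.2 h2
      exact ⟨(b1, b2), by
        show m • ((b1, b2) : G) = x
        ext <;> simp [hmdef, ← hb1, ← hb2, nsmul_eq_mul]⟩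
  have himage : Finset.univ.image mhom = Tf := by
    ext x
    simp only [Finset.mem_image, Finset.mem_univ, true_and, hTfdef, Set.mem_toFinset,
      SetLike.mem_coe]
    rw [← hrange]
    exact (AddMonoidHom.mem_range).symm
  -- torsion of Q
  have hQtor : ∀ y : Q, n • y = 0 := by
    intro y
    obtain ⟨z, rfl⟩ := QuotientAddGroup.mk'_surjective K y
    rw [← map_nsmul, nsmul_self_zmod_sq, map_zero]
  -- inner sums as finset sums
  set F : Q → AddMonoidAlgebra ℚ G :=
    fun v => ∑ x ∈ Finset.univ.filter (fun x => q x = v), AddMonoidAlgebra.single x (1 : ℚ) with hFdef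
  have hinner : ∀ v : Q,
      (∑ᶠ x ∈ {x : G | q x = v}, AddMonoidAlgebra.single x (1 : ℚ)) = F v := by
    intro v
    rw [finsum_mem_eq_toFinset_sum]
    congr 1
    ext x
    simp
  -- fibers of q over q w are w + K
  have hqeq : ∀ a b : G, q a = q b ↔ a - b ∈ K := fun a b =>
    QuotientAddGroup.eq_iff_sub_mem
  have hfiber : ∀ w : G, F (q w) = ∑ θ ∈ Kf, AddMonoidAlgebra.single (w + θ) (1 : ℚ) := by
    intro w
    rw [hFdef]
    refine Finset.sum_nbij' (fun x => x - w) (fun θ => w + θ) ?_ ?_ ?_ ?_ ?_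
    · intro x hx
      simp only [Finset.mem_filter, Finset.mem_univ, true_and] at hx
      simp only [hKfdef, Set.mem_toFinset, SetLike.mem_coe]
      exact (hqeq x w).mp hx
    · intro θ hθ
      simp only [hKfdef, Set.mem_toFinset, SetLike.mem_coe] at hθ
      simp only [Finset.mem_filter, Finset.mem_univ, true_and]
      rw [hqeq]
      simpa using hθ
    · intro x _; simp
    · intro θ _; simp
    · intro x _; rw [add_sub_cancel]
  -- key identity: k • A = ck • B'
  have key : k • (∑ y : Q, F (m • y)) =
      ck • ∑ θ ∈ Kf, ∑ τ ∈ Tf, AddMonoidAlgebra.single (τ + θ) (1 : ℚ) := by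
    have h1 : ∑ z : G, F (m • q z) = ∑ b ∈ Finset.univ.image q, Nat.card q.ker • F (m • b) :=
      sum_comp_hom q (fun y => F (m • y))
    have himq : Finset.univ.image q = Finset.univ := by
      ext y
      simp only [Finset.mem_image, Finset.mem_univ, true_and, iff_true]
      exact QuotientAddGroup.mk'_surjective K y
    have hkerq : Nat.card q.ker = k := by
      rw [hqdef, QuotientAddGroup.ker_mk']
    rw [himq, hkerq] at h1
    have h1' : ∑ z : G, F (m • q z) = k • ∑ y : Q, F (m • y) := by
      rw [h1, Finset.smul_sum]
    rw [← h1']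
    have h2 : ∀ z : G, F (m • q z) = ∑ θ ∈ Kf, AddMonoidAlgebra.single (m • z + θ) (1 : ℚ) := by
      intro z
      rw [← map_nsmul q m z]
      exact hfiber (m • z)
    calc ∑ z : G, F (m • q z)
        = ∑ z : G, ∑ θ ∈ Kf, AddMonoidAlgebra.single (m • z + θ) (1 : ℚ) :=
          Finset.sum_congr rfl fun z _ => h2 z
      _ = ∑ θ ∈ Kf, ∑ z : G, AddMonoidAlgebra.single (m • z + θ) (1 : ℚ) := Finset.sum_comm
      _ = ∑ θ ∈ Kf, ck • ∑ τ ∈ Tf, AddMonoidAlgebra.single (τ + θ) (1 : ℚ) := by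
          refine Finset.sum_congr rfl fun θ _ => ?_
          have h3 : ∑ z : G, AddMonoidAlgebra.single (mhom z + θ) (1 : ℚ)
              = ∑ b ∈ Finset.univ.image mhom, ck • AddMonoidAlgebra.single (b + θ) (1 : ℚ) :=
            sum_comp_hom mhom (fun b => AddMonoidAlgebra.single (b + θ) (1 : ℚ))
          rw [himage] at h3
          have : ∀ z : G, mhom z = m • z := fun z => rfl
          simp only [this] at h3
          rw [h3, Finset.smul_sum]
      _ = ck • ∑ θ ∈ Kf, ∑ τ ∈ Tf, AddMonoidAlgebra.single (τ + θ) (1 : ℚ) := by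
          rw [Finset.smul_sum]
  -- cardinality identities
  have hIk : K.index * k = Nat.card G :=
    (AddSubgroup.card_eq_card_quotient_mul_card_addSubgroup K).symm
  have htck : t * ck = Nat.card G := by
    have e1 : Nat.card (G ⧸ mhom.ker) = Nat.card mhom.range :=
      Nat.card_congr (QuotientAddGroup.quotientKerEquivRange mhom).toEquiv
    have e2 : Nat.card mhom.range = t := by rw [hrange]
    have h := AddSubgroup.card_eq_card_quotient_mul_card_addSubgroup mhom.ker
    rw [e1, e2] at h
    exact h.symm
  have hk0 : (k : ℚ) ≠ 0 := by
    have : 0 < k := Nat.card_pos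
    exact_mod_cast this.ne'
  have ht0 : (t : ℚ) ≠ 0 := by
    have : 0 < t := Nat.card_pos
    exact_mod_cast this.ne'
  have hI0 : (K.index : ℚ) ≠ 0 := by
    have := AddSubgroup.index_ne_zero_of_finite (H := K)
    exact_mod_cast this
  -- rewrite the LHS
  rw [finsum_eq_sum_of_fintype]
  have hlhs : ∀ φ : ZMod n →+ Q,
      (∑ᶠ x ∈ {x : ZMod n × ZMod n | q x = φ (((m : ℕ) : ZMod n))}, AddMonoidAlgebra.single x (1 : ℚ))
        = F (m • φ 1) := by
    intro φ
    rw [hinner]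
    congr 1
    rw [show (((m : ℕ) : ZMod n)) = m • (1 : ZMod n) by rw [nsmul_eq_mul, mul_one],
      map_nsmul]
  simp only [hlhs]
  rw [← Finset.smul_sum]
  have hbij : ∑ φ : ZMod n →+ Q, F (m • φ 1) = ∑ y : Q, F (m • y) :=
    Fintype.sum_bijective (fun φ => φ 1) (ev_bijective n Q hQtor)
      _ _ (fun φ => rfl)
  rw [hbij]
  -- rewrite the RHS
  set SK : AddMonoidAlgebra ℚ G := ∑ θ ∈ Kf, AddMonoidAlgebra.single θ (1 : ℚ) with hSKdef
  set ST : AddMonoidAlgebra ℚ G := ∑ τ ∈ Tf, AddMonoidAlgebra.single τ (1 : ℚ) with hSTdef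
  have hTK : TK n K = (k : ℚ)⁻¹ • SK := by
    rw [TK, finsum_mem_eq_toFinset_sum]
  have hTk : Tk n ω = (t : ℚ)⁻¹ • ST := by
    rw [Tk, TK, finsum_mem_eq_toFinset_sum]
  rw [hTK, hTk, smul_mul_assoc, mul_smul_comm]
  have hprod : SK * ST = ∑ θ ∈ Kf, ∑ τ ∈ Tf, AddMonoidAlgebra.single (τ + θ) (1 : ℚ) := by
    rw [hSKdef, hSTdef, Finset.sum_mul_sum]
    refine Finset.sum_congr rfl fun θ _ => Finset.sum_congr rfl fun τ _ => ?_
    have h1 := AddMonoidAlgebra.single_mul_single (R := ℚ) (M := G)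
      (m₁ := θ) (m₂ := τ) (r₁ := (1:ℚ)) (r₂ := (1:ℚ))
    rw [one_mul, add_comm θ τ] at h1
    exact h1
  rw [hprod]
  -- finish with scalar arithmetic
  set B : AddMonoidAlgebra ℚ G := ∑ θ ∈ Kf, ∑ τ ∈ Tf, AddMonoidAlgebra.single (τ + θ) (1 : ℚ) with hBdef
  set A : AddMonoidAlgebra ℚ G := ∑ y : Q, F (m • y) with hAdef
  have keyQ : (k : ℚ) • A = (ck : ℚ) • B := by
    rw [Nat.cast_smul_eq_nsmul, Nat.cast_smul_eq_nsmul]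
    exact key
  have hA : A = ((k : ℚ)⁻¹ * (ck : ℚ)) • B := by
    rw [mul_smul, ← keyQ, inv_smul_smul₀ hk0]
  rw [hA, smul_smul, smul_smul, smul_smul]
  congr 1
  have hcast : (K.index : ℚ) * k = (t : ℚ) * ck := by
    have : K.index * k = t * ck := by rw [hIk, htck]
    exact_mod_cast this
  field_simp
  nlinarith [hcast]
end
end
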